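/- arXiv:1503.04702 — 7 statements merged into one kernel-verified Lean document; each statement's English description precedes it below -/
import Mathlib

section
/- For any finite bipartite graph G with parts V1 and V2 such that V1 is nonempty, there exists a nonempty subset D of V1 such that |Odd_G(D)| ≤ |V2| / (2·(1 − 2^{−|V1|})). -/
open Finset

open Classical in
lemma aux_two_mul_count_le {V : Type*} [DecidableEq V] (A : Finset V) (p : V → Prop) :
    2 * (A.powerset.filter fun D => Odd ((D.filter p).card)).card ≤ 2 ^ A.card := by
  by_cases hb : ∃ b ∈ A, p b
  · obtain ⟨b, hbA, hpb⟩ := hb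
    set g : Finset V → Finset V := fun D => if b ∈ D then D.erase b else insert b D with hg
    have hmem : ∀ D ∈ A.powerset, g D ∈ A.powerset := by
      intro D hD
      rw [Finset.mem_powerset] at *
      by_cases h : b ∈ D
      · simpa [hg, h] using (Finset.erase_subset _ _).trans hD
      · simpa [hg, h] using Finset.insert_subset hbA hD
    have hpar : ∀ D : Finset V, Odd (((g D).filter p).card) ↔ ¬ Odd ((D.filter p).card) := by
      intro D
      by_cases h : b ∈ D
      · have hbf : b ∈ D.filter p := Finset.mem_filter.2 ⟨h, hpb⟩
        have heq : ((g D).filter p) = (D.filter p).erase b := by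
          simp [hg, h, Finset.filter_erase]
        rw [heq]
        have hcard := Finset.card_erase_add_one hbf
        rw [← hcard]
        simp [Nat.odd_add_one]
      · have hbf : b ∉ D.filter p := fun hx => h (Finset.mem_filter.1 hx).1
        have heq : ((g D).filter p) = insert b (D.filter p) := by
          simp [hg, h, Finset.filter_insert, hpb]
        rw [heq, Finset.card_insert_of_notMem hbf]
        simp [Nat.odd_add_one]
    have hinv : ∀ D : Finset V, g (g D) = D := by
      intro D
      by_cases h : b ∈ D
      · simp [hg, h, Finset.insert_erase]
      · simp [hg, h, Finset.erase_insert]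
    have key : (A.powerset.filter fun D => Odd ((D.filter p).card)).card =
        (A.powerset.filter fun D => ¬ Odd ((D.filter p).card)).card := by
      apply Finset.card_bij' (fun D _ => g D) (fun D _ => g D)
      · intro D hD
        rw [Finset.mem_filter] at *
        exact ⟨hmem D hD.1, fun h => (hpar D).1 h hD.2⟩
      · intro D hD
        rw [Finset.mem_filter] at *
        exact ⟨hmem D hD.1, (hpar D).2 hD.2⟩
      · intro D _; exact hinv D
      · intro D _; exact hinv D
    have hsplit := Finset.card_filter_add_card_filter_not
      (s := A.powerset) (p := fun D => Odd ((D.filter p).card))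
    rw [Finset.card_powerset] at hsplit
    omega
  · push_neg at hb
    have : (A.powerset.filter fun D => Odd ((D.filter p).card)) = ∅ := by
      rw [Finset.filter_eq_empty_iff]
      intro D hD
      rw [Finset.mem_powerset] at hD
      have : D.filter p = ∅ := by
        rw [Finset.filter_eq_empty_iff]
        exact fun x hx => hb x (hD hx)
      simp [this]
    simp [this]

open Classical in
/-- The odd-neighbourhood of `D` in `G`: vertices having an odd number of neighbours in `D`. -/
noncomputable def oddNbhd {V : Type*} [Fintype V] (G : SimpleGraph V) (D : Finset V) :
    Finset V :=
  Finset.univ.filter fun v => Odd ((D.filter fun u => G.Adj v u).card)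

/-- For any finite bipartite graph `G` with parts `V1`, `V2` and `V1` nonempty, there is a
nonempty `D ⊆ V1` with `|Odd_G(D)| ≤ |V2| / (2 (1 - 2^{-|V1|}))`. -/
theorem exists_small_odd_nbhd {V : Type*} [Fintype V] [DecidableEq V] (G : SimpleGraph V)
    (V1 V2 : Finset V) (hdisj : Disjoint V1 V2) (hcover : V1 ∪ V2 = Finset.univ)
    (hbip : ∀ u v : V, G.Adj u v → (u ∈ V1 ∧ v ∈ V2) ∨ (u ∈ V2 ∧ v ∈ V1))
    (hV1 : V1.Nonempty) :
    ∃ D : Finset V, D.Nonempty ∧ D ⊆ V1 ∧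
      ((oddNbhd G D).card : ℝ) ≤ (V2.card : ℝ) / (2 * (1 - (2 : ℝ) ^ (-(V1.card : ℤ)))) := by
  classical
  set n := V1.card with hn
  set P := V1.powerset with hP
  -- swap sums
  have hswap : ∑ D ∈ P, (oddNbhd G D).card =
      ∑ v : V, (P.filter fun D => Odd ((D.filter fun u => G.Adj v u).card)).card := by
    simp only [oddNbhd, Finset.card_filter]
    rw [Finset.sum_comm]
  -- per-vertex bounds
  have hV1count : ∀ v ∈ V1,
      (P.filter fun D => Odd ((D.filter fun u => G.Adj v u).card)).card = 0 := by
    intro v hv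
    rw [Finset.card_eq_zero, Finset.filter_eq_empty_iff]
    intro D hD
    rw [Finset.mem_powerset] at hD
    have : (D.filter fun u => G.Adj v u) = ∅ := by
      rw [Finset.filter_eq_empty_iff]
      intro u hu hadj
      rcases hbip v u hadj with ⟨_, h2⟩ | ⟨h1, _⟩
      · exact (Finset.disjoint_left.1 hdisj (hD hu)) h2
      · exact (Finset.disjoint_left.1 hdisj hv) h1
    simp [this]
  have hbound : 2 * ∑ D ∈ P, (oddNbhd G D).card ≤ V2.card * 2 ^ n := by
    rw [hswap, Finset.mul_sum]
    have hrestrict : ∑ v : V,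
        2 * (P.filter fun D => Odd ((D.filter fun u => G.Adj v u).card)).card
        = ∑ v ∈ V2, 2 * (P.filter fun D => Odd ((D.filter fun u => G.Adj v u).card)).card := by
      refine (Finset.sum_subset (Finset.subset_univ V2) ?_).symm
      intro v _ hv
      have hv1 : v ∈ V1 := by
        have := Finset.mem_univ v
        rw [← hcover, Finset.mem_union] at this
        tauto
      rw [hV1count v hv1]
      ring
    rw [hrestrict]
    calc ∑ v ∈ V2, 2 * (P.filter fun D => Odd ((D.filter fun u => G.Adj v u).card)).card
        ≤ ∑ _v ∈ V2, 2 ^ n := by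
          refine Finset.sum_le_sum fun v _ => ?_
          exact aux_two_mul_count_le V1 (fun u => G.Adj v u)
      _ = V2.card * 2 ^ n := by rw [Finset.sum_const, smul_eq_mul]
  -- get the minimizer over nonempty subsets
  set S := P.erase ∅ with hS
  have hV1S : V1 ∈ S := by
    rw [hS, Finset.mem_erase]
    exact ⟨hV1.ne_empty, Finset.mem_powerset_self V1⟩
  obtain ⟨D, hDS, hmin⟩ := S.exists_min_image (fun D => (oddNbhd G D).card) ⟨V1, hV1S⟩
  have hDP : D ∈ P := Finset.mem_of_mem_erase hDS
  have hDne : D ≠ ∅ := Finset.ne_of_mem_erase hDS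
  refine ⟨D, Finset.nonempty_iff_ne_empty.2 hDne, Finset.mem_powerset.1 hDP, ?_⟩
  -- sum over S equals sum over P
  have hodd0 : (oddNbhd G (∅ : Finset V)).card = 0 := by
    simp [oddNbhd]
  have hsumS : ∑ D ∈ S, (oddNbhd G D).card = ∑ D ∈ P, (oddNbhd G D).card := by
    rw [hS, ← Finset.sum_erase_add P _ (Finset.empty_mem_powerset V1), hodd0, add_zero]
  have hScard : S.card = 2 ^ n - 1 := by
    rw [hS, Finset.card_erase_of_mem (Finset.empty_mem_powerset V1), Finset.card_powerset]
  have hcardle : S.card * (oddNbhd G D).card ≤ ∑ D ∈ S, (oddNbhd G D).card := by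
    calc S.card * (oddNbhd G D).card = ∑ _E ∈ S, (oddNbhd G D).card := by
          rw [Finset.sum_const, smul_eq_mul]
      _ ≤ ∑ E ∈ S, (oddNbhd G E).card := Finset.sum_le_sum fun E hE => hmin E hE
  -- the natural number inequality
  have hnat : 2 * ((2 ^ n - 1) * (oddNbhd G D).card) ≤ V2.card * 2 ^ n := by
    rw [← hScard]
    calc 2 * (S.card * (oddNbhd G D).card) ≤ 2 * ∑ D ∈ S, (oddNbhd G D).card :=
          Nat.mul_le_mul_left 2 hcardle
      _ = 2 * ∑ D ∈ P, (oddNbhd G D).card := by rw [hsumS]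
      _ ≤ V2.card * 2 ^ n := hbound
  -- pass to the reals
  have hn1 : 1 ≤ n := hV1.card_pos
  have h2n : (1:ℝ) ≤ 2 ^ n := one_le_pow₀ (by norm_num : (1:ℝ) ≤ 2)
  have hpow : (2:ℝ) ^ (-(n : ℤ)) = ((2:ℝ) ^ n)⁻¹ := by
    rw [zpow_neg, zpow_natCast]
  have hne : (2:ℝ) ^ n ≠ 0 := by positivity
  have hgt : (0:ℝ) < 2 ^ n - 1 := by
    have : (2:ℝ) ^ 1 ≤ 2 ^ n := pow_le_pow_right₀ (by norm_num) hn1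
    simp at this; linarith
  have hcast : 2 * (((2:ℝ) ^ n - 1) * (oddNbhd G D).card) ≤ (V2.card : ℝ) * 2 ^ n := by
    have := hnat
    have h1 : (1:ℕ) ≤ 2 ^ n := Nat.one_le_two_pow
    exact_mod_cast (by push_cast [Nat.cast_sub h1] at this ⊢; linarith : _)
  rw [hpow]
  have hden : (0:ℝ) < 2 * (1 - ((2:ℝ) ^ n)⁻¹) := by
    have : ((2:ℝ) ^ n)⁻¹ < 1 := by
      rw [inv_lt_one_iff₀]; right; linarith
    linarith
  rw [le_div_iff₀ hden]
  have : ((oddNbhd G D).card : ℝ) * (2 * (1 - ((2:ℝ)^n)⁻¹)) * 2 ^ n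
      = 2 * (((2:ℝ) ^ n - 1) * (oddNbhd G D).card) := by
    field_simp
  nlinarith [hcast, hgt, (by positivity : (0:ℝ) < (2:ℝ)^n)]
end

section
/- For every binary linear code of length n and dimension k ≥ 1 (i.e., a k-dimensional subspace C of the vector space of functions from Fin n to ZMod 2), there exists a nonzero codeword of Hamming weight at most n / (2·(1 − 2^{−k})). -/
/-- Plotkin bound: every binary linear code of length `n` and dimension `k ≥ 1` contains a
nonzero codeword of Hamming weight at most `n / (2 (1 - 2^{-k}))`. -/
theorem plotkin_bound (n k : ℕ) (hk : 1 ≤ k)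
    (C : Submodule (ZMod 2) (Fin n → ZMod 2))
    (hdim : Module.finrank (ZMod 2) C = k) :
    ∃ c : Fin n → ZMod 2, c ∈ C ∧ c ≠ 0 ∧
      (hammingNorm c : ℝ) ≤ (n : ℝ) / (2 * (1 - (2 : ℝ) ^ (-(k : ℤ)))) := by
  classical
  haveI : Fintype C := Fintype.ofFinite C
  have hcard : Fintype.card C = 2 ^ k := by
    have := Module.card_eq_pow_finrank (K := ZMod 2) (V := C)
    rwa [ZMod.card, hdim] at this
  -- one : nonzero elements of ZMod 2 are 1
  have hone : ∀ a : ZMod 2, a ≠ 0 → a = 1 := by decide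
  -- sum of weights
  have hswap : ∑ c : C, hammingNorm (c : Fin n → ZMod 2)
      = ∑ i : Fin n, (Finset.univ.filter (fun c : C => (c : Fin n → ZMod 2) i ≠ 0)).card := by
    simp only [hammingNorm, Finset.card_filter]
    rw [Finset.sum_comm]
  have hcoord : ∀ i : Fin n,
      (Finset.univ.filter (fun c : C => (c : Fin n → ZMod 2) i ≠ 0)).card ≤ 2 ^ (k - 1) := by
    intro i
    set S := Finset.univ.filter (fun c : C => (c : Fin n → ZMod 2) i ≠ 0) with hS
    by_cases h : S.Nonempty
    · obtain ⟨c0, hc0⟩ := h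
      have hc0i : (c0 : Fin n → ZMod 2) i ≠ 0 := by
        simpa [hS] using hc0
      have hmap : ∀ c ∈ S, c + c0 ∈ Finset.univ.filter
          (fun c : C => ¬ (c : Fin n → ZMod 2) i ≠ 0) := by
        intro c hc
        have hci : (c : Fin n → ZMod 2) i ≠ 0 := by simpa [hS] using hc
        simp only [Finset.mem_filter, Finset.mem_univ, true_and, not_not]
        show ((c : Fin n → ZMod 2) + (c0 : Fin n → ZMod 2)) i = 0
        rw [Pi.add_apply, hone _ hci, hone _ hc0i]
        decide
      have hinj : ∀ a ∈ S, ∀ b ∈ S, a + c0 = b + c0 → a = b := by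
        intro a _ b _ hab
        exact add_right_cancel hab
      have hle := Finset.card_le_card_of_injOn _ hmap hinj
      have hcompl : S.card + (Finset.univ.filter
          (fun c : C => ¬ (c : Fin n → ZMod 2) i ≠ 0)).card = 2 ^ k := by
        rw [Finset.card_filter_add_card_filter_not, Finset.card_univ, hcard]
      have : 2 * S.card ≤ 2 ^ k := by omega
      have hpow : 2 ^ k = 2 * 2 ^ (k - 1) := by
        rw [← pow_succ']
        congr 1
        omega
      omega
    · simp [Finset.not_nonempty_iff_eq_empty.mp h]
  have hsum : ∑ c : C, hammingNorm (c : Fin n → ZMod 2) ≤ n * 2 ^ (k - 1) := by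
    rw [hswap]
    calc _ ≤ ∑ _i : Fin n, 2 ^ (k - 1) := Finset.sum_le_sum fun i _ => hcoord i
    _ = n * 2 ^ (k - 1) := by simp [Finset.sum_const, Finset.card_univ]
  -- nonzero minimal codeword
  haveI : Module.Finite (ZMod 2) C := Module.Finite.of_finite
  have hnt : Nontrivial C := by
    rw [← Module.finrank_pos_iff (R := ZMod 2)]
    omega
  obtain ⟨c1, hc1⟩ := exists_ne (0 : C)
  set T := Finset.univ.filter (fun c : C => c ≠ 0) with hT
  have hc1T : c1 ∈ T := by simp [hT, hc1]
  obtain ⟨c, hcT, hmin⟩ := T.exists_min_image (fun c : C => hammingNorm (c : Fin n → ZMod 2))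
    ⟨c1, hc1T⟩
  have hcne : c ≠ 0 := by simpa [hT] using hcT
  have hTcard : T.card = 2 ^ k - 1 := by
    rw [hT, Finset.filter_ne', Finset.card_erase_of_mem (Finset.mem_univ _),
      Finset.card_univ, hcard]
  set w := hammingNorm (c : Fin n → ZMod 2) with hw
  have hlow : (2 ^ k - 1) * w ≤ ∑ c' : C, hammingNorm (c' : Fin n → ZMod 2) := by
    calc (2 ^ k - 1) * w = T.card * w := by rw [hTcard]
    _ ≤ ∑ c' ∈ T, hammingNorm (c' : Fin n → ZMod 2) := by
        simpa using Finset.card_nsmul_le_sum T _ w hmin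
    _ ≤ ∑ c' : C, hammingNorm (c' : Fin n → ZMod 2) :=
        Finset.sum_le_sum_of_subset (Finset.subset_univ T)
  have key : (2 ^ k - 1) * w ≤ n * 2 ^ (k - 1) := le_trans hlow hsum
  refine ⟨(c : Fin n → ZMod 2), c.2, ?_, ?_⟩
  · intro h0
    exact hcne (Subtype.ext h0)
  · have hP : (0 : ℝ) < 2 ^ k := by positivity
    have h2k : (2 : ℝ) ^ (-(k : ℤ)) = ((2 : ℝ) ^ k)⁻¹ := by
      rw [zpow_neg, zpow_natCast]
    have hgt1 : (1 : ℝ) < 2 ^ k := by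
      have : (2:ℝ)^1 ≤ 2^k := pow_le_pow_right₀ (by norm_num) hk
      linarith [this]
    have hD : (0 : ℝ) < 2 * (1 - (2 : ℝ) ^ (-(k : ℤ))) := by
      rw [h2k]
      have : ((2:ℝ)^k)⁻¹ < 1 := by
        rw [inv_lt_one_iff₀]; right; exact hgt1
      linarith
    rw [le_div_iff₀ hD, h2k]
    have h1 : (1:ℕ) ≤ 2 ^ k := Nat.one_le_two_pow
    have keyZ : ((2:ℤ) ^ k - 1) * w ≤ n * 2 ^ (k - 1) := by
      zify [h1] at key; exact key
    have hkey : ((2:ℝ) ^ k - 1) * w ≤ n * 2 ^ (k - 1) := by exact_mod_cast keyZ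
    have hpow2 : (2:ℝ) ^ (k - 1) * 2 = 2 ^ k := by
      rw [← pow_succ]; congr 1; omega
    calc (hammingNorm (c : Fin n → ZMod 2) : ℝ) * (2 * (1 - ((2:ℝ) ^ k)⁻¹))
        = 2 * ((w : ℝ) * ((2:ℝ) ^ k - 1)) / 2 ^ k := by
          rw [hw]; field_simp
      _ ≤ 2 * ((n : ℝ) * 2 ^ (k - 1)) / 2 ^ k := by
          gcongr 2 * ?_ / 2 ^ k
          nlinarith [hkey]
      _ = n := by
          rw [show (2:ℝ) * ((n:ℝ) * 2 ^ (k-1)) = n * 2 ^ k by rw [← hpow2]; ring,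
            mul_div_assoc, div_self hP.ne', mul_one]
end

section
/- For any finite simple graph G with vertex cover number τ(G) > 0, one has 2·δ_loc(G) ≤ τ(G) + log₂(τ(G)) + 1, where δ_loc(G) + 1 = min over all nonempty vertex subsets D of |D ∪ Odd_G(D)|. -/
open Finset

section helpers
variable {α : Type*} [DecidableEq α]

/-- Pairing (involution) bound: if an involution on `S` maps `f`-elements to non-`f`-elements,
then at most half of `S` satisfies `f`. -/
lemma half_le (S : Finset α) (f : α → Prop) [DecidablePred f] (σ : α → α)
    (hmem : ∀ x ∈ S, σ x ∈ S) (hinv : ∀ x ∈ S, σ (σ x) = x)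
    (hflip : ∀ x ∈ S, f x → ¬ f (σ x)) : 2 * (S.filter f).card ≤ S.card := by
  have h1 : (S.filter f).card ≤ (S.filter (fun x => ¬ f x)).card := by
    apply Finset.card_le_card_of_injOn σ
    · intro x hx
      rw [Finset.mem_coe, mem_filter] at hx ⊢
      exact ⟨hmem x hx.1, hflip x hx.1 hx.2⟩
    · intro x hx y hy hxy
      have hx' := (mem_filter.mp hx).1
      have hy' := (mem_filter.mp hy).1
      have := congrArg σ hxy
      rwa [hinv x hx', hinv y hy'] at this
  have h2 := Finset.card_filter_add_card_filter_not (s := S) (p := f)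
  omega

lemma exact_half (S : Finset α) (f : α → Prop) [DecidablePred f] (σ : α → α)
    (hmem : ∀ x ∈ S, σ x ∈ S) (hinv : ∀ x ∈ S, σ (σ x) = x)
    (hflip : ∀ x ∈ S, (f x ↔ ¬ f (σ x))) : 2 * (S.filter f).card = S.card := by
  have h1 := half_le S f σ hmem hinv (fun x hx hf => (hflip x hx).mp hf)
  have h2 := half_le S (fun x => ¬ f x) σ hmem hinv (fun x hx hf => by
    simp only [not_not]
    by_contra hn
    exact hf ((hflip x hx).mpr hn))
  have h3 := Finset.card_filter_add_card_filter_not (s := S) (p := f)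
  omega

/-- toggle an element in a finset -/
def tog (u : α) (x : Finset α) : Finset α := if u ∈ x then x.erase u else insert u x

lemma tog_subset {u : α} {x T : Finset α} (hu : u ∈ T) (hx : x ⊆ T) : tog u x ⊆ T := by
  unfold tog; split
  · exact (erase_subset u x).trans hx
  · exact insert_subset hu hx

lemma tog_tog (u : α) (x : Finset α) : tog u (tog u x) = x := by
  unfold tog
  by_cases h : u ∈ x
  · rw [if_pos h, if_neg (notMem_erase u x), insert_erase h]
  · rw [if_neg h, if_pos (mem_insert_self u x), erase_insert h]

lemma mem_tog_self (u : α) (x : Finset α) : u ∈ tog u x ↔ u ∉ x := by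
  unfold tog; by_cases h : u ∈ x <;> simp [h]

lemma mem_tog_other {u w : α} (hw : w ≠ u) (x : Finset α) : w ∈ tog u x ↔ w ∈ x := by
  unfold tog; by_cases h : u ∈ x <;> simp [h, hw, Finset.mem_erase, Finset.mem_insert]

lemma mem_tog' (a u : α) (x : Finset α) :
    a ∈ tog u x ↔ ((a = u ∧ u ∉ x) ∨ (a ≠ u ∧ a ∈ x)) := by
  unfold tog
  by_cases h : u ∈ x <;> by_cases ha : a = u <;>
    simp [h, ha, Finset.mem_erase, Finset.mem_insert]

lemma tog_comm {u v : α} (h : u ≠ v) (x : Finset α) :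
    tog u (tog v x) = tog v (tog u x) := by
  ext a
  simp only [mem_tog']
  by_cases hau : a = u <;> by_cases hav : a = v <;>
    simp [hau, hav, h, h.symm]

lemma tog_filter_parity {u : α} {x : Finset α} (p : α → Prop) [DecidablePred p]
    (hp : p u) : Odd (((tog u x).filter p).card) ↔ ¬ Odd ((x.filter p).card) := by
  unfold tog
  by_cases h : u ∈ x
  · rw [if_pos h, Finset.filter_erase, Finset.card_erase_of_mem (by simp [h, hp])]
    have : 1 ≤ (x.filter p).card := Finset.card_pos.mpr ⟨u, by simp [h, hp]⟩
    rw [Nat.odd_iff, Nat.odd_iff]; omega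
  · rw [if_neg h, Finset.filter_insert, if_pos hp,
      Finset.card_insert_of_notMem (by simp [h])]
    rw [Nat.odd_iff, Nat.odd_iff]; omega

lemma tog_filter_eq {u : α} {x : Finset α} (p : α → Prop) [DecidablePred p]
    (hp : ¬ p u) : (tog u x).filter p = x.filter p := by
  unfold tog
  by_cases h : u ∈ x
  · rw [if_pos h, Finset.filter_erase, Finset.erase_eq_of_notMem (by simp [hp])]
  · rw [if_neg h, Finset.filter_insert, if_neg hp]

lemma tog_card_parity (u : α) (x : Finset α) :
    Even ((tog u x).card) ↔ ¬ Even (x.card) := by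
  unfold tog
  by_cases h : u ∈ x
  · rw [if_pos h, Finset.card_erase_of_mem h]
    have : 1 ≤ x.card := Finset.card_pos.mpr ⟨u, h⟩
    rw [Nat.even_iff, Nat.even_iff]; omega
  · rw [if_neg h, Finset.card_insert_of_notMem h, Nat.even_iff, Nat.even_iff]; omega

/-- number of even-size subsets is half the power set, for a nonempty set -/
lemma even_card_powerset (B : Finset α) (hB : B.Nonempty) :
    2 * (B.powerset.filter fun y => Even y.card).card = 2 ^ B.card := by
  obtain ⟨c, hc⟩ := hB
  rw [← Finset.card_powerset B]
  apply exact_half _ _ (tog c)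
  · intro x hx
    rw [Finset.mem_powerset] at hx ⊢
    exact tog_subset hc hx
  · intro x _; exact tog_tog c x
  · intro x _
    rw [tog_card_parity]
    tauto

end helpers
section oddhalf
variable {V : Type*} [Fintype V] [DecidableEq V]

lemma odd_half (G : SimpleGraph V) [DecidableRel G.Adj] (A B : Finset V) (c : V)
    (hAB : Disjoint A B) :
    2 * ((A.powerset ×ˢ (B.powerset.filter fun y => Even y.card)).filter
        (fun p => Odd (((p.1 ∪ p.2).filter fun u => G.Adj c u).card))).card
      ≤ (A.powerset ×ˢ (B.powerset.filter fun y => Even y.card)).card := by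
  set P := A.powerset ×ˢ (B.powerset.filter fun y => Even y.card) with hP
  have hmemP : ∀ p : Finset V × Finset V, p ∈ P ↔
      (p.1 ⊆ A ∧ p.2 ⊆ B ∧ Even p.2.card) := by
    intro p
    simp [hP, Finset.mem_product, Finset.mem_powerset, Finset.mem_filter, and_assoc]
  have hsplit : ∀ p : Finset V × Finset V, p ∈ P →
      ((p.1 ∪ p.2).filter fun u => G.Adj c u).card
        = (p.1.filter fun u => G.Adj c u).card + (p.2.filter fun u => G.Adj c u).card := by
    intro p hp
    rw [Finset.filter_union]
    apply Finset.card_union_of_disjoint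
    have := (hmemP p).mp hp
    exact Finset.disjoint_filter_filter (hAB.mono this.1 this.2.1)
  by_cases hA : ∃ u ∈ A, G.Adj c u
  · obtain ⟨u, hu, hadj⟩ := hA
    apply half_le P _ (fun p => (tog u p.1, p.2))
    · intro p hp
      rw [hmemP] at hp ⊢
      exact ⟨tog_subset hu hp.1, hp.2⟩
    · intro p hp
      simp [tog_tog]
    · intro p hp hf
      have hmem' : (tog u p.1, p.2) ∈ P := by
        rw [hmemP] at hp ⊢
        exact ⟨tog_subset hu hp.1, hp.2⟩
      rw [hsplit _ hmem']
      rw [hsplit _ hp] at hf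
      simp only
      have hflip := tog_filter_parity (x := p.1) (fun u => G.Adj c u) hadj
      rw [Nat.odd_iff] at hflip hf ⊢
      rw [Nat.not_odd_iff] at hflip
      omega
  · push_neg at hA
    have hx0 : ∀ p : Finset V × Finset V, p ∈ P →
        (p.1.filter fun u => G.Adj c u) = ∅ := by
      intro p hp
      apply Finset.filter_eq_empty_iff.mpr
      intro u hu
      exact hA u (((hmemP p).mp hp).1 hu)
    by_cases hB1 : ∃ c₁ ∈ B, G.Adj c c₁
    · obtain ⟨c₁, hc₁, hadj₁⟩ := hB1
      by_cases hB2 : ∃ c₂ ∈ B, ¬ G.Adj c c₂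
      · obtain ⟨c₂, hc₂, hadj₂⟩ := hB2
        have hne : c₁ ≠ c₂ := by rintro rfl; exact hadj₂ hadj₁
        apply half_le P _ (fun p => (p.1, tog c₁ (tog c₂ p.2)))
        · intro p hp
          rw [hmemP] at hp ⊢
          refine ⟨hp.1, tog_subset hc₁ (tog_subset hc₂ hp.2.1), ?_⟩
          rw [tog_card_parity, tog_card_parity]
          simp [hp.2.2]
        · intro p hp
          show (p.1, tog c₁ (tog c₂ (tog c₁ (tog c₂ p.2)))) = p
          rw [tog_comm hne.symm (tog c₂ p.2), tog_tog, tog_tog]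
        · intro p hp hf
          have hmem' : (p.1, tog c₁ (tog c₂ p.2)) ∈ P := by
            rw [hmemP] at hp ⊢
            refine ⟨hp.1, tog_subset hc₁ (tog_subset hc₂ hp.2.1), ?_⟩
            rw [tog_card_parity, tog_card_parity]
            simp [hp.2.2]
          rw [hsplit _ hmem']
          rw [hsplit _ hp] at hf
          simp only
          have heq : ((tog c₂ p.2).filter fun u => G.Adj c u) = p.2.filter fun u => G.Adj c u :=
            tog_filter_eq _ hadj₂
          have hflip := tog_filter_parity (x := tog c₂ p.2) (fun u => G.Adj c u) hadj₁
          rw [heq] at hflip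
          rw [Nat.odd_iff] at hflip hf ⊢
          rw [Nat.not_odd_iff] at hflip
          omega
      · push_neg at hB2
        have : P.filter (fun p => Odd (((p.1 ∪ p.2).filter fun u => G.Adj c u).card)) = ∅ := by
          apply Finset.filter_eq_empty_iff.mpr
          intro p hp
          rw [hsplit _ hp, hx0 _ hp]
          have : (p.2.filter fun u => G.Adj c u) = p.2 :=
            Finset.filter_eq_self.mpr (fun u hu => hB2 u (((hmemP p).mp hp).2.1 hu))
          rw [this]
          simp only [Finset.card_empty, Nat.zero_add]
          rw [Nat.odd_iff, ← Nat.not_even_iff]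
          intro hcon
          exact hcon ((hmemP p).mp hp).2.2
        rw [this]
        simp
    · push_neg at hB1
      have : P.filter (fun p => Odd (((p.1 ∪ p.2).filter fun u => G.Adj c u).card)) = ∅ := by
        apply Finset.filter_eq_empty_iff.mpr
        intro p hp
        rw [hsplit _ hp, hx0 _ hp]
        have : (p.2.filter fun u => G.Adj c u) = ∅ :=
          Finset.filter_eq_empty_iff.mpr (fun u hu => hB1 u (((hmemP p).mp hp).2.1 hu))
        rw [this]
        simp
      rw [this]
      simp
end oddhalf
section core
variable {V : Type*} [Fintype V] [DecidableEq V]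

lemma mem_oddNbhd {G : SimpleGraph V} [DecidableRel G.Adj] {D : Finset V} {v : V} :
    v ∈ oddNbhd G D ↔ Odd ((D.filter fun u => G.Adj v u).card) := by
  simp only [oddNbhd, Finset.mem_filter, Finset.mem_univ, true_and]
  congr! 3

lemma core (G : SimpleGraph V) [DecidableRel G.Adj] (C A B : Finset V)
    (hcov : ∀ u v : V, G.Adj u v → u ∈ C ∨ v ∈ C)
    (hAI : ∀ v ∈ A, v ∉ C)
    (hBC : B ⊆ C)
    (hpat : ∀ v, v ∉ C → ∀ c₁ ∈ B, ∀ c₂ ∈ B, (G.Adj v c₁ ↔ G.Adj v c₂))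
    (hb : B.card ≠ 1)
    (hA1 : A.Nonempty) :
    ∃ D : Finset V, D.Nonempty ∧
      4 * ((A.powerset ×ˢ (B.powerset.filter fun y => Even y.card)).card - 1)
        * (D ∪ oddNbhd G D).card
        ≤ (A.powerset ×ˢ (B.powerset.filter fun y => Even y.card)).card
          * (2 * A.card + 2 * C.card + B.card) := by
  classical
  set E := B.powerset.filter fun y => Even y.card with hE
  set P := A.powerset ×ˢ E with hPdef
  have hmemP : ∀ p : Finset V × Finset V, p ∈ P ↔ (p.1 ⊆ A ∧ p.2 ⊆ B ∧ Even p.2.card) := by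
    intro p
    simp [hPdef, hE, Finset.mem_product, Finset.mem_powerset, Finset.mem_filter, and_assoc]
  have hAB : Disjoint A B := by
    rw [Finset.disjoint_left]
    intro a ha hb'
    exact hAI a ha (hBC hb')
  -- odd neighbourhoods stay inside C
  have hoddC : ∀ p ∈ P, ∀ w, w ∉ C → w ∉ oddNbhd G (p.1 ∪ p.2) := by
    intro p hp w hw hodd
    rw [mem_oddNbhd] at hodd
    obtain ⟨hp1, hp2, hp2e⟩ := (hmemP p).mp hp
    have hx : (p.1.filter fun u => G.Adj w u) = ∅ := by
      apply Finset.filter_eq_empty_iff.mpr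
      intro u hu hadj
      rcases hcov w u hadj with h | h
      · exact hw h
      · exact hAI u (hp1 hu) h
    have hsplit : ((p.1 ∪ p.2).filter fun u => G.Adj w u)
        = (p.1.filter fun u => G.Adj w u) ∪ (p.2.filter fun u => G.Adj w u) :=
      Finset.filter_union _ _ _
    by_cases hadj : ∃ c ∈ p.2, G.Adj w c
    · obtain ⟨c, hc, hwc⟩ := hadj
      have hy : (p.2.filter fun u => G.Adj w u) = p.2 := by
        apply Finset.filter_eq_self.mpr
        intro c' hc'
        exact (hpat w hw c (hp2 hc) c' (hp2 hc')).mp hwc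
      rw [hsplit, hx, hy] at hodd
      simp only [Finset.empty_union] at hodd
      rw [Nat.odd_iff, ← Nat.not_even_iff] at hodd
      exact hodd hp2e
    · push_neg at hadj
      have hy : (p.2.filter fun u => G.Adj w u) = ∅ :=
        Finset.filter_eq_empty_iff.mpr (fun c hc h => hadj c hc h)
      rw [hsplit, hx, hy] at hodd
      simp at hodd
  -- per-pair value bound
  have hsubval : ∀ p ∈ P, ((p.1 ∪ p.2) ∪ oddNbhd G (p.1 ∪ p.2)).card ≤
      p.1.card + (((B.filter fun c => c ∈ p.2 ∨ c ∈ oddNbhd G (p.1 ∪ p.2))).card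
        + (((C \ B).filter fun c => c ∈ oddNbhd G (p.1 ∪ p.2)).card)) := by
    intro p hp
    obtain ⟨hp1, hp2, _⟩ := (hmemP p).mp hp
    have hsub : ((p.1 ∪ p.2) ∪ oddNbhd G (p.1 ∪ p.2)) ⊆
        p.1 ∪ ((B.filter fun c => c ∈ p.2 ∨ c ∈ oddNbhd G (p.1 ∪ p.2))
          ∪ ((C \ B).filter fun c => c ∈ oddNbhd G (p.1 ∪ p.2))) := by
      intro w hw
      rw [Finset.mem_union] at hw
      rcases hw with hw | hw
      · rw [Finset.mem_union] at hw
        rcases hw with hw | hw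
        · exact Finset.mem_union_left _ hw
        · refine Finset.mem_union_right _ (Finset.mem_union_left _ ?_)
          exact Finset.mem_filter.mpr ⟨hp2 hw, Or.inl hw⟩
      · have hwC : w ∈ C := by
          by_contra hwC
          exact hoddC p hp w hwC hw
        by_cases hwB : w ∈ B
        · exact Finset.mem_union_right _ (Finset.mem_union_left _
            (Finset.mem_filter.mpr ⟨hwB, Or.inr hw⟩))
        · exact Finset.mem_union_right _ (Finset.mem_union_right _
            (Finset.mem_filter.mpr ⟨Finset.mem_sdiff.mpr ⟨hwC, hwB⟩, hw⟩))
    refine (Finset.card_le_card hsub).trans ?_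
    refine (Finset.card_union_le _ _).trans ?_
    exact Nat.add_le_add_left (Finset.card_union_le _ _) _
  -- rewrite the three sums as sums over vertices
  have hsum1 : ∑ p ∈ P, p.1.card = ∑ v ∈ A, (P.filter fun p => v ∈ p.1).card := by
    have h1 : ∀ p ∈ P, p.1.card = ∑ v ∈ A, (if v ∈ p.1 then 1 else 0) := by
      intro p hp
      rw [← Finset.card_filter]
      congr 1
      rw [Finset.filter_mem_eq_inter, Finset.inter_eq_right.mpr ((hmemP p).mp hp).1]
    rw [Finset.sum_congr rfl h1, Finset.sum_comm]
    exact Finset.sum_congr rfl fun v _ => (Finset.card_filter _ _).symm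
  have hsum2 : ∑ p ∈ P, ((B.filter fun c => c ∈ p.2 ∨ c ∈ oddNbhd G (p.1 ∪ p.2))).card
      = ∑ c ∈ B, (P.filter fun p => c ∈ p.2 ∨ c ∈ oddNbhd G (p.1 ∪ p.2)).card := by
    have h1 : ∀ p ∈ P, ((B.filter fun c => c ∈ p.2 ∨ c ∈ oddNbhd G (p.1 ∪ p.2))).card
        = ∑ c ∈ B, (if c ∈ p.2 ∨ c ∈ oddNbhd G (p.1 ∪ p.2) then 1 else 0) := by
      intro p _
      exact Finset.card_filter _ _
    rw [Finset.sum_congr rfl h1, Finset.sum_comm]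
    exact Finset.sum_congr rfl fun c _ => (Finset.card_filter _ _).symm
  have hsum3 : ∑ p ∈ P, (((C \ B).filter fun c => c ∈ oddNbhd G (p.1 ∪ p.2)).card)
      = ∑ c ∈ C \ B, (P.filter fun p => c ∈ oddNbhd G (p.1 ∪ p.2)).card := by
    have h1 : ∀ p ∈ P, (((C \ B).filter fun c => c ∈ oddNbhd G (p.1 ∪ p.2))).card
        = ∑ c ∈ C \ B, (if c ∈ oddNbhd G (p.1 ∪ p.2) then 1 else 0) := by
      intro p _
      exact Finset.card_filter _ _
    rw [Finset.sum_congr rfl h1, Finset.sum_comm]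
    exact Finset.sum_congr rfl fun c _ => (Finset.card_filter _ _).symm
  -- individual halving bounds
  have hb1 : ∀ v ∈ A, 2 * (P.filter fun p => v ∈ p.1).card ≤ P.card := by
    intro v hv
    apply half_le P _ (fun p => (tog v p.1, p.2))
    · intro p hp
      rw [hmemP] at hp ⊢
      exact ⟨tog_subset hv hp.1, hp.2⟩
    · intro p _
      show (tog v (tog v p.1), p.2) = p
      rw [tog_tog]
    · intro p _ hf
      show ¬ v ∈ tog v p.1
      rw [mem_tog_self]
      simpa using hf
  have hb3 : ∀ c, 2 * (P.filter fun p => c ∈ oddNbhd G (p.1 ∪ p.2)).card ≤ P.card := by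
    intro c
    have heq : P.filter (fun p => c ∈ oddNbhd G (p.1 ∪ p.2))
        = P.filter (fun p => Odd (((p.1 ∪ p.2).filter fun u => G.Adj c u).card)) :=
      Finset.filter_congr (fun p _ => by rw [mem_oddNbhd])
    rw [heq]
    exact odd_half G A B c hAB
  have hb2 : ∀ c ∈ B, 4 * (P.filter fun p => c ∈ p.2 ∨ c ∈ oddNbhd G (p.1 ∪ p.2)).card
      ≤ 3 * P.card := by
    intro c hc
    have hB2 : 1 < B.card := by
      have : 1 ≤ B.card := Finset.card_pos.mpr ⟨c, hc⟩
      omega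
    obtain ⟨c', hc', hne⟩ := Finset.exists_mem_ne hB2 c
    have hmemσ : ∀ p ∈ P, (p.1, tog c (tog c' p.2)) ∈ P := by
      intro p hp
      rw [hmemP] at hp ⊢
      refine ⟨hp.1, tog_subset hc (tog_subset hc' hp.2.1), ?_⟩
      rw [tog_card_parity, tog_card_parity]
      simp [hp.2.2]
    have hinvσ : ∀ p ∈ P, ((p.1, tog c (tog c' p.2)).1,
        tog c (tog c' (p.1, tog c (tog c' p.2)).2)) = p := by
      intro p _
      show (p.1, tog c (tog c' (tog c (tog c' p.2)))) = p
      rw [tog_comm hne (tog c' p.2), tog_tog, tog_tog]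
    have hflipmem : ∀ y : Finset V, c ∈ tog c (tog c' y) ↔ c ∉ y := by
      intro y
      rw [mem_tog_self, mem_tog_other (Ne.symm hne)]
    have h1 : 2 * (P.filter fun p => c ∈ p.2).card ≤ P.card := by
      apply half_le P _ (fun p => (p.1, tog c (tog c' p.2))) hmemσ hinvσ
      intro p _ hf
      show ¬ c ∈ tog c (tog c' p.2)
      rw [hflipmem]
      simpa using hf
    have h2 : 2 * (P.filter fun p => c ∉ p.2).card ≤ P.card := by
      apply half_le P _ (fun p => (p.1, tog c (tog c' p.2))) hmemσ hinvσ
      intro p _ hf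
      show ¬ c ∉ tog c (tog c' p.2)
      rw [hflipmem]
      simpa using hf
    have hS1 : P.filter (fun p => c ∉ p.2)
        = A.powerset ×ˢ ((B.erase c).powerset.filter fun y => Even y.card) := by
      ext ⟨x, y⟩
      simp only [Finset.mem_filter, hPdef, hE, Finset.mem_product, Finset.mem_powerset,
        Finset.subset_erase]
      tauto
    have h3 := odd_half G A (B.erase c) c (hAB.mono_right (Finset.erase_subset c B))
    rw [← hS1] at h3
    have h4 : (P.filter fun p => c ∉ p.2 ∧ c ∈ oddNbhd G (p.1 ∪ p.2))
        = (P.filter (fun p => c ∉ p.2)).filter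
            (fun p => Odd (((p.1 ∪ p.2).filter fun u => G.Adj c u).card)) := by
      rw [Finset.filter_filter]
      exact Finset.filter_congr (fun p _ => by rw [mem_oddNbhd])
    have h5 : 4 * (P.filter fun p => c ∉ p.2 ∧ c ∈ oddNbhd G (p.1 ∪ p.2)).card ≤ P.card := by
      rw [h4]
      omega
    have h6 : (P.filter fun p => c ∈ p.2 ∨ c ∈ oddNbhd G (p.1 ∪ p.2)).card
        ≤ (P.filter fun p => c ∈ p.2).card
          + (P.filter fun p => c ∉ p.2 ∧ c ∈ oddNbhd G (p.1 ∪ p.2)).card := by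
      refine (Finset.card_le_card ?_).trans (Finset.card_union_le _ _)
      intro p hp
      rw [Finset.mem_filter] at hp
      rw [Finset.mem_union, Finset.mem_filter, Finset.mem_filter]
      by_cases h : c ∈ p.2
      · exact Or.inl ⟨hp.1, h⟩
      · exact Or.inr ⟨hp.1, h, hp.2.resolve_left h⟩
    omega
  -- total sum bound
  have main : 4 * (∑ p ∈ P, ((p.1 ∪ p.2) ∪ oddNbhd G (p.1 ∪ p.2)).card)
      ≤ P.card * (2 * A.card + 2 * C.card + B.card) := by
    have t1 : ∑ p ∈ P, ((p.1 ∪ p.2) ∪ oddNbhd G (p.1 ∪ p.2)).card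
        ≤ (∑ v ∈ A, (P.filter fun p => v ∈ p.1).card)
          + ((∑ c ∈ B, (P.filter fun p => c ∈ p.2 ∨ c ∈ oddNbhd G (p.1 ∪ p.2)).card)
            + (∑ c ∈ C \ B, (P.filter fun p => c ∈ oddNbhd G (p.1 ∪ p.2)).card)) := by
      calc ∑ p ∈ P, ((p.1 ∪ p.2) ∪ oddNbhd G (p.1 ∪ p.2)).card
          ≤ ∑ p ∈ P, (p.1.card + (((B.filter fun c => c ∈ p.2 ∨ c ∈ oddNbhd G (p.1 ∪ p.2))).card
            + (((C \ B).filter fun c => c ∈ oddNbhd G (p.1 ∪ p.2)).card))) :=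
            Finset.sum_le_sum hsubval
        _ = _ := by
            rw [Finset.sum_add_distrib, Finset.sum_add_distrib, hsum1, hsum2, hsum3]
    have b1 : 2 * (∑ v ∈ A, (P.filter fun p => v ∈ p.1).card) ≤ A.card * P.card := by
      rw [Finset.mul_sum]
      calc ∑ v ∈ A, 2 * (P.filter fun p => v ∈ p.1).card ≤ ∑ _v ∈ A, P.card :=
            Finset.sum_le_sum hb1
        _ = A.card * P.card := by rw [Finset.sum_const, smul_eq_mul]
    have b2 : 4 * (∑ c ∈ B, (P.filter fun p => c ∈ p.2 ∨ c ∈ oddNbhd G (p.1 ∪ p.2)).card)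
        ≤ B.card * (3 * P.card) := by
      rw [Finset.mul_sum]
      calc ∑ c ∈ B, 4 * (P.filter fun p => c ∈ p.2 ∨ c ∈ oddNbhd G (p.1 ∪ p.2)).card
          ≤ ∑ _c ∈ B, 3 * P.card := Finset.sum_le_sum hb2
        _ = B.card * (3 * P.card) := by rw [Finset.sum_const, smul_eq_mul]
    have b3 : 2 * (∑ c ∈ C \ B, (P.filter fun p => c ∈ oddNbhd G (p.1 ∪ p.2)).card)
        ≤ (C \ B).card * P.card := by
      rw [Finset.mul_sum]
      calc ∑ c ∈ C \ B, 2 * (P.filter fun p => c ∈ oddNbhd G (p.1 ∪ p.2)).card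
          ≤ ∑ _c ∈ C \ B, P.card := Finset.sum_le_sum (fun c _ => hb3 c)
        _ = (C \ B).card * P.card := by rw [Finset.sum_const, smul_eq_mul]
    have hcb : (C \ B).card = C.card - B.card := Finset.card_sdiff_of_subset hBC
    have hble : B.card ≤ C.card := Finset.card_le_card hBC
    have hCeq : C.card = (C \ B).card + B.card := by omega
    calc 4 * (∑ p ∈ P, ((p.1 ∪ p.2) ∪ oddNbhd G (p.1 ∪ p.2)).card)
        ≤ 2 * (A.card * P.card) + (B.card * (3 * P.card) + 2 * ((C \ B).card * P.card)) := by
          have := Nat.mul_le_mul_left 4 t1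
          omega
      _ = P.card * (2 * A.card + 2 * ((C \ B).card + B.card) + B.card) := by ring
      _ = P.card * (2 * A.card + 2 * C.card + B.card) := by rw [← hCeq]
  -- existence of a good nonempty D
  have hp0 : ((∅ : Finset V), (∅ : Finset V)) ∈ P :=
    (hmemP _).mpr ⟨Finset.empty_subset _, Finset.empty_subset _, by simp⟩
  obtain ⟨v, hv⟩ := hA1
  have hp1 : (({v} : Finset V), (∅ : Finset V)) ∈ P :=
    (hmemP _).mpr ⟨Finset.singleton_subset_iff.mpr hv, Finset.empty_subset _, by simp⟩
  have hg2 : 2 ≤ P.card := by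
    have : 1 < P.card := Finset.one_lt_card.mpr
      ⟨_, hp1, _, hp0, by simp [Prod.ext_iff]⟩
    omega
  by_contra hcon
  push_neg at hcon
  set g := P.card with hg
  set R := 2 * A.card + 2 * C.card + B.card with hR
  have hlow : ∀ p ∈ P.erase ((∅, ∅) : Finset V × Finset V),
      g * R + 1 ≤ 4 * (g - 1) * ((p.1 ∪ p.2) ∪ oddNbhd G (p.1 ∪ p.2)).card := by
    intro p hp
    rw [Finset.mem_erase] at hp
    have hne : (p.1 ∪ p.2).Nonempty := by
      rcases Finset.eq_empty_or_nonempty (p.1 ∪ p.2) with h | h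
      · exfalso
        apply hp.1
        have h2 := Finset.union_eq_empty.mp h
        exact Prod.ext h2.1 h2.2
      · exact h
    have := hcon _ hne
    omega
  have hsumlow : (P.erase ((∅, ∅) : Finset V × Finset V)).card * (g * R + 1)
      ≤ ∑ p ∈ P.erase ((∅, ∅) : Finset V × Finset V),
          4 * (g - 1) * ((p.1 ∪ p.2) ∪ oddNbhd G (p.1 ∪ p.2)).card := by
    have := Finset.card_nsmul_le_sum (P.erase ((∅, ∅) : Finset V × Finset V))
      (fun p => 4 * (g - 1) * ((p.1 ∪ p.2) ∪ oddNbhd G (p.1 ∪ p.2)).card) (g * R + 1) hlow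
    simpa [smul_eq_mul] using this
  have hsumup : ∑ p ∈ P.erase ((∅, ∅) : Finset V × Finset V),
        4 * (g - 1) * ((p.1 ∪ p.2) ∪ oddNbhd G (p.1 ∪ p.2)).card
      ≤ (g - 1) * (g * R) := by
    calc ∑ p ∈ P.erase ((∅, ∅) : Finset V × Finset V),
          4 * (g - 1) * ((p.1 ∪ p.2) ∪ oddNbhd G (p.1 ∪ p.2)).card
        ≤ ∑ p ∈ P, 4 * (g - 1) * ((p.1 ∪ p.2) ∪ oddNbhd G (p.1 ∪ p.2)).card :=
          Finset.sum_le_sum_of_subset (Finset.erase_subset _ _)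
      _ = (g - 1) * (4 * ∑ p ∈ P, ((p.1 ∪ p.2) ∪ oddNbhd G (p.1 ∪ p.2)).card) := by
          rw [Finset.mul_sum, Finset.mul_sum]
          exact Finset.sum_congr rfl fun p _ => by ring
      _ ≤ (g - 1) * (g * R) := Nat.mul_le_mul_left _ main
  have hcarde : (P.erase ((∅, ∅) : Finset V × Finset V)).card = g - 1 :=
    Finset.card_erase_of_mem hp0
  rw [hcarde] at hsumlow
  have hfin : (g - 1) * (g * R + 1) ≤ (g - 1) * (g * R) := le_trans hsumlow hsumup
  have : g * R + 1 ≤ g * R := Nat.le_of_mul_le_mul_left hfin (by omega)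
  omega

end core
section key
variable {V : Type*} [Fintype V] [DecidableEq V]

lemma nat_le_two_pow_pred (c : ℕ) (hc : 1 ≤ c) : c ≤ 2 ^ (c - 1) := by
  have := Nat.lt_two_pow_self (n := c - 1)
  omega

lemma key (G : SimpleGraph V) [DecidableRel G.Adj] (C : Finset V) (t : ℕ)
    (hcov : ∀ u v : V, G.Adj u v → u ∈ C ∨ v ∈ C)
    (hmin : ∀ c ∈ C, ∃ v, v ∉ C ∧ G.Adj c v)
    (hC1 : 1 ≤ C.card)
    (ht1 : 1 ≤ t)
    (hlow : 2 ^ (t - 1) ≤ C.card)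
    (hhigh : C.card < 2 ^ t) :
    ∃ D : Finset V, D.Nonempty ∧ 2 * (D ∪ oddNbhd G D).card ≤ C.card + t + 2 := by
  classical
  set I := (Finset.univ : Finset V) \ C with hI
  have hInotC : ∀ v ∈ I, v ∉ C := fun v hv => (Finset.mem_sdiff.mp hv).2
  have hmemI : ∀ v, v ∈ I ↔ v ∉ C := fun v => by simp [hI]
  have hgt : t + 1 ≤ 2 ^ t := by
    have := Nat.lt_two_pow_self (n := t)
    omega
  by_cases hq : t ≤ I.card
  · -- Case A : enough independent vertices
    obtain ⟨T, hTI, hTcard⟩ := Finset.exists_subset_card_eq (s := I) hq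
    have hTne : T.Nonempty := by
      rw [← Finset.card_pos, hTcard]; omega
    obtain ⟨D, hDne, hDle⟩ := core G C T ∅ hcov (fun v hv => hInotC v (hTI hv))
      (Finset.empty_subset _) (by intro v _ c₁ hc₁; simp at hc₁) (by simp) hTne
    refine ⟨D, hDne, ?_⟩
    have hE : (((∅ : Finset V).powerset).filter fun y => Even y.card).card = 1 := by
      simp [Finset.powerset_empty, Finset.filter_singleton]
    have hPcard : (T.powerset ×ˢ (((∅ : Finset V).powerset).filter fun y => Even y.card)).card
        = 2 ^ t := by
      rw [Finset.card_product, Finset.card_powerset, hTcard, hE, mul_one]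
    rw [hPcard, hTcard, Finset.card_empty] at hDle
    by_contra hcon
    push_neg at hcon
    set τ := C.card with hτ
    set val := (D ∪ oddNbhd G D).card with hval
    have h1 : τ + t + 3 ≤ 2 * val := by omega
    obtain ⟨m, hm⟩ : ∃ m, 2 ^ t = m + 1 :=
      ⟨2 ^ t - 1, by have := Nat.one_le_two_pow (n := t); omega⟩
    rw [hm] at hDle hhigh hgt
    simp only [Nat.add_sub_cancel] at hDle
    have e1 : 2 * m * (τ + t + 3) ≤ 2 * m * (2 * val) := Nat.mul_le_mul_left _ h1
    have e4 : 2 * m * (τ + t + 3) ≤ (m + 1) * (2 * t + 2 * τ + 0) := by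
      calc 2 * m * (τ + t + 3) ≤ 2 * m * (2 * val) := e1
        _ = 4 * m * val := by ring
        _ ≤ _ := hDle
    have e5 : 6 * m ≤ 2 * t + 2 * τ := by nlinarith
    omega
  · -- Case B : few independent vertices, pigeonhole on neighbourhood patterns
    push_neg at hq
    have hIne : I.Nonempty := by
      obtain ⟨c, hc⟩ := Finset.card_pos.mp (by omega : 0 < C.card)
      obtain ⟨v, hvC, _⟩ := hmin c hc
      exact ⟨v, (hmemI v).mpr hvC⟩
    have hq1 : 1 ≤ I.card := Finset.card_pos.mpr hIne
    have hmaps : ∀ c ∈ C, (I.filter fun v => G.Adj c v) ∈ I.powerset.erase ∅ := by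
      intro c hc
      rw [Finset.mem_erase, Finset.mem_powerset]
      obtain ⟨v, hvC, hadj⟩ := hmin c hc
      refine ⟨?_, Finset.filter_subset _ _⟩
      intro h
      have : v ∈ I.filter fun v => G.Adj c v :=
        Finset.mem_filter.mpr ⟨(hmemI v).mpr hvC, hadj⟩
      rw [h] at this
      simp at this
    have hnum : (I.powerset.erase ∅).card * (t - I.card) < C.card := by
      have hBsetcard : (I.powerset.erase ∅).card = 2 ^ I.card - 1 := by
        rw [Finset.card_erase_of_mem (by simp), Finset.card_powerset]
      rw [hBsetcard]
      have h1 : t - I.card ≤ 2 ^ (t - I.card - 1) :=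
        nat_le_two_pow_pred (t - I.card) (by omega)
      have h3 : 2 ^ I.card * 2 ^ (t - I.card - 1) = 2 ^ (t - 1) := by
        rw [← pow_add]
        congr 1
        omega
      have hpq : 0 < 2 ^ I.card := pow_pos (by norm_num) I.card
      calc (2 ^ I.card - 1) * (t - I.card) < 2 ^ I.card * (t - I.card) := by
            apply Nat.mul_lt_mul_of_lt_of_le (by omega) (le_refl _) (by omega)
        _ ≤ 2 ^ I.card * 2 ^ (t - I.card - 1) := Nat.mul_le_mul_left _ h1
        _ = 2 ^ (t - 1) := h3
        _ ≤ C.card := hlow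
    obtain ⟨P₀, _, hfiber⟩ :=
      Finset.exists_lt_card_fiber_of_mul_lt_card_of_maps_to hmaps hnum
    obtain ⟨B, hBsub, hBcard⟩ := Finset.exists_subset_card_eq
      (s := C.filter fun c => (I.filter fun v => G.Adj c v) = P₀) (n := t - I.card + 1) (by omega)
    have hBC : B ⊆ C := hBsub.trans (Finset.filter_subset _ _)
    have hBpat : ∀ v, v ∉ C → ∀ c₁ ∈ B, ∀ c₂ ∈ B, (G.Adj v c₁ ↔ G.Adj v c₂) := by
      intro v hv c₁ hc₁ c₂ hc₂
      have h₁ := (Finset.mem_filter.mp (hBsub hc₁)).2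
      have h₂ := (Finset.mem_filter.mp (hBsub hc₂)).2
      have hv' : v ∈ I := (hmemI v).mpr hv
      constructor
      · intro h
        have hmemf : v ∈ I.filter fun u => G.Adj c₁ u :=
          Finset.mem_filter.mpr ⟨hv', h.symm⟩
        rw [h₁, ← h₂] at hmemf
        exact (Finset.mem_filter.mp hmemf).2.symm
      · intro h
        have hmemf : v ∈ I.filter fun u => G.Adj c₂ u :=
          Finset.mem_filter.mpr ⟨hv', h.symm⟩
        rw [h₂, ← h₁] at hmemf
        exact (Finset.mem_filter.mp hmemf).2.symm
    have hBne : B.card ≠ 1 := by omega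
    obtain ⟨D, hDne, hDle⟩ := core G C I B hcov hInotC hBC hBpat hBne hIne
    refine ⟨D, hDne, ?_⟩
    have hBnonempty : B.Nonempty := by
      rw [← Finset.card_pos, hBcard]; omega
    have hEcard : 2 * ((B.powerset).filter fun y => Even y.card).card = 2 ^ B.card :=
      even_card_powerset B hBnonempty
    have hPcard : (I.powerset ×ˢ ((B.powerset).filter fun y => Even y.card)).card = 2 ^ t := by
      have h2 : 2 * (I.powerset ×ˢ ((B.powerset).filter fun y => Even y.card)).card
          = 2 ^ (I.card + B.card) := by
        rw [Finset.card_product, Finset.card_powerset, pow_add, mul_left_comm, hEcard]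
      have hqb : I.card + B.card = t + 1 := by omega
      rw [hqb, pow_succ'] at h2
      omega
    rw [hPcard] at hDle
    by_contra hcon
    push_neg at hcon
    have h1 : C.card + t + 3 ≤ 2 * (D ∪ oddNbhd G D).card := by omega
    obtain ⟨m, hm⟩ : ∃ m, 2 ^ t = m + 1 :=
      ⟨2 ^ t - 1, by have := Nat.one_le_two_pow (n := t); omega⟩
    rw [hm] at hDle hhigh hgt
    simp only [Nat.add_sub_cancel] at hDle
    have e1 : 2 * m * (C.card + t + 3) ≤ 2 * m * (2 * (D ∪ oddNbhd G D).card) :=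
      Nat.mul_le_mul_left _ h1
    have e4 : 2 * m * (C.card + t + 3) ≤ (m + 1) * (2 * I.card + 2 * C.card + B.card) := by
      calc 2 * m * (C.card + t + 3) ≤ 2 * m * (2 * (D ∪ oddNbhd G D).card) := e1
        _ = 4 * m * (D ∪ oddNbhd G D).card := by ring
        _ ≤ _ := hDle
    have hqb : I.card + B.card = t + 1 := by omega
    have hτm : C.card ≤ m := by omega
    have htm : t ≤ m := by omega
    nlinarith [e4, hqb, hτm, htm, ht1, hq1, hq]
end key
/-- For any finite simple graph `G` with vertex cover number `τ(G) > 0`,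
`2 δ_loc(G) ≤ τ(G) + log₂(τ(G)) + 1`, where
`δ_loc(G) + 1 = min_{∅ ≠ D ⊆ V} |D ∪ Odd_G(D)|`. -/
theorem two_dloc_le_tau_add_log_add_one {V : Type*} [Fintype V] [DecidableEq V]
    (G : SimpleGraph V) (dloc tau : ℕ)
    (hd : dloc + 1 = sInf {m : ℕ | ∃ D : Finset V, D.Nonempty ∧ (D ∪ oddNbhd G D).card = m})
    (ht : tau = sInf {m : ℕ | ∃ S : Finset V,
      (∀ u v : V, G.Adj u v → u ∈ S ∨ v ∈ S) ∧ S.card = m})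
    (htau : 0 < tau) :
    2 * (dloc : ℝ) ≤ (tau : ℝ) + Real.logb 2 (tau : ℝ) + 1 := by
  classical
  -- extract a minimum vertex cover
  have hset_ne : {m : ℕ | ∃ S : Finset V,
      (∀ u v : V, G.Adj u v → u ∈ S ∨ v ∈ S) ∧ S.card = m}.Nonempty :=
    ⟨(Finset.univ : Finset V).card, ⟨Finset.univ, fun u _ _ => Or.inl (Finset.mem_univ u), rfl⟩⟩
  have htau_mem : tau ∈ {m : ℕ | ∃ S : Finset V,
      (∀ u v : V, G.Adj u v → u ∈ S ∨ v ∈ S) ∧ S.card = m} := ht ▸ Nat.sInf_mem hset_ne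
  obtain ⟨C, hcov, hCcard⟩ := htau_mem
  have htaule : ∀ S : Finset V, (∀ u v : V, G.Adj u v → u ∈ S ∨ v ∈ S) → tau ≤ S.card := by
    intro S hS
    rw [ht]
    exact Nat.sInf_le ⟨S, hS, rfl⟩
  -- each vertex of the minimum cover has a neighbour outside
  have hmin : ∀ c ∈ C, ∃ v, v ∉ C ∧ G.Adj c v := by
    intro c hc
    by_contra h
    push_neg at h
    have hcov' : ∀ u v : V, G.Adj u v → u ∈ C.erase c ∨ v ∈ C.erase c := by
      intro u v huv
      rcases hcov u v huv with h1 | h1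
      · by_cases hu : u = c
        · subst hu
          have hvC : v ∈ C := by
            by_contra hvC
            exact h v hvC huv
          exact Or.inr (Finset.mem_erase.mpr ⟨(G.ne_of_adj huv).symm, hvC⟩)
        · exact Or.inl (Finset.mem_erase.mpr ⟨hu, h1⟩)
      · by_cases hv : v = c
        · subst hv
          have huC : u ∈ C := by
            by_contra huC
            exact h u huC huv.symm
          exact Or.inl (Finset.mem_erase.mpr ⟨G.ne_of_adj huv, huC⟩)
        · exact Or.inr (Finset.mem_erase.mpr ⟨hv, h1⟩)
    have hle := htaule _ hcov'
    rw [Finset.card_erase_of_mem hc] at hle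
    have hpos : 0 < C.card := Finset.card_pos.mpr ⟨c, hc⟩
    omega
  -- the scale parameter t
  set t := Nat.log 2 tau + 1 with htdef
  have hlog1 : 2 ^ (t - 1) ≤ tau := by
    rw [htdef, Nat.add_sub_cancel]; exact Nat.pow_log_le_self 2 (by omega : tau ≠ 0)
  have hlog2 : tau < 2 ^ t := Nat.lt_pow_succ_log_self (by norm_num) tau
  obtain ⟨D, hDne, hDle⟩ := key G C t hcov hmin (by omega) (by omega)
    (by rw [hCcard]; exact hlog1) (by rw [hCcard]; exact hlog2)
  -- δ_loc + 1 is at most the achieved value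
  have hdle : dloc + 1 ≤ (D ∪ oddNbhd G D).card := by
    rw [hd]
    exact Nat.sInf_le ⟨D, hDne, rfl⟩
  have hnat : 2 * dloc ≤ tau + Nat.log 2 tau + 1 := by
    rw [hCcard] at hDle
    omega
  -- pass to the reals
  have hlogreal : (Nat.log 2 tau : ℝ) ≤ Real.logb 2 (tau : ℝ) := by
    have h1 : ((2 : ℝ) ^ (Nat.log 2 tau)) ≤ (tau : ℝ) := by
      exact_mod_cast Nat.pow_log_le_self 2 (by omega : tau ≠ 0)
    have h2 : Real.logb 2 ((2 : ℝ) ^ (Nat.log 2 tau)) ≤ Real.logb 2 (tau : ℝ) :=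
      Real.logb_le_logb_of_le (by norm_num) (pow_pos (by norm_num) _) h1
    rwa [Real.logb_pow, Real.logb_self_eq_one (by norm_num), mul_one] at h2
  have hcast : (2 * dloc : ℝ) ≤ (tau : ℝ) + (Nat.log 2 tau : ℝ) + 1 := by
    exact_mod_cast hnat
  push_cast at hcast ⊢
  linarith
end

section
/- For any finite simple graph G of order n > 0, one has δ_loc(G) < (3/8)·n + log₂(n). -/
open Finset

namespace DlocAux


lemma zmod2_cases : ∀ a : ZMod 2, a = 0 ∨ a = 1 := by decide

lemma zmod2sq_add_self : ∀ a : ZMod 2 × ZMod 2, a + a = 0 := by decide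

variable {V : Type*} [Fintype V] [DecidableEq V]

open Classical in
noncomputable def suppF (x : V → ZMod 2) : Finset V :=
  Finset.univ.filter fun v => x v ≠ 0

open Classical in
noncomputable def adjM (G : SimpleGraph V) : Matrix V V (ZMod 2) :=
  fun v u => if G.Adj v u then 1 else 0

open Classical in
lemma mulVec_eq_card (G : SimpleGraph V) (x : V → ZMod 2) (v : V) :
    (adjM G).mulVec x v = ((((suppF x)).filter fun u => G.Adj v u).card : ZMod 2) := by
  have h1 : ((suppF x).filter fun u => G.Adj v u)
      = Finset.univ.filter fun u => G.Adj v u ∧ x u ≠ 0 := by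
    ext u
    simp [suppF, Finset.mem_filter, and_comm]
  rw [h1]
  have h2 : ∀ u : V, adjM G v u * x u = if G.Adj v u ∧ x u ≠ 0 then 1 else 0 := by
    intro u
    rcases zmod2_cases (x u) with h | h <;> simp [adjM, h]
  simp only [Matrix.mulVec, dotProduct, h2]
  rw [Finset.sum_boole]

open Classical in
lemma oddNbhd_suppF (G : SimpleGraph V) (x : V → ZMod 2) :
    oddNbhd G (suppF x) = suppF ((adjM G).mulVec x) := by
  ext v
  simp only [oddNbhd, suppF, Finset.mem_filter, Finset.mem_univ, true_and]
  rw [mulVec_eq_card G x v]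
  rw [Ne, ZMod.natCast_eq_zero_iff]
  unfold suppF
  simp [Nat.odd_iff, Nat.two_dvd_ne_zero]

open Classical in
lemma key (G : SimpleGraph V) (k : ℕ)
    (hmin : ∀ D : Finset V, D.Nonempty → k ≤ (D ∪ oddNbhd G D).card)
    (X : Finset V) :
    ∃ c a : ℕ, c = 2 ^ a ∧ Fintype.card V ≤ a + 2 * (Fintype.card V - X.card)
      ∧ 4 * ((c - 1) * k) ≤ 3 * (X.card * c) := by
  classical
  haveI : Fact (Nat.Prime 2) := ⟨Nat.prime_two⟩
  set n := Fintype.card V with hn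
  let f : (V → ZMod 2) →ₗ[ZMod 2] (V → ZMod 2) := (adjM G).mulVecLin
  let C := (Xᶜ : Finset V)
  let Lm : (V → ZMod 2) →ₗ[ZMod 2] ((↥C → ZMod 2) × (↥C → ZMod 2)) :=
    (LinearMap.funLeft (ZMod 2) (ZMod 2) (Subtype.val : ↥C → V)).prod
      ((LinearMap.funLeft (ZMod 2) (ZMod 2) (Subtype.val : ↥C → V)).comp f)
  set K := LinearMap.ker Lm with hKdef
  have hKmem : ∀ x : V → ZMod 2, x ∈ K →
      ∀ v : V, v ∉ X → x v = 0 ∧ (adjM G).mulVec x v = 0 := by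
    intro x hx v hv
    have hvC : v ∈ C := by simp [C, Finset.mem_compl, hv]
    have h0 : Lm x = 0 := hx
    have h1 := congrArg (fun z => z.1 ⟨v, hvC⟩) h0
    have h2 := congrArg (fun z => z.2 ⟨v, hvC⟩) h0
    simp only [Lm, LinearMap.prod_apply, Pi.prod, LinearMap.coe_comp, Function.comp_apply,
      LinearMap.funLeft_apply, Matrix.mulVecLin_apply, Prod.fst, Prod.snd, Prod.fst_zero,
      Prod.snd_zero, Pi.zero_apply, f] at h1 h2
    exact ⟨h1, h2⟩
  -- rank bound
  have hfin : Module.finrank (ZMod 2) (V → ZMod 2) = n := by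
    simp [Module.finrank_pi, hn]
  have h1 := LinearMap.finrank_range_add_finrank_ker Lm
  have h2 : Module.finrank (ZMod 2) (LinearMap.range Lm) ≤ 2 * (n - X.card) := by
    have hle := Submodule.finrank_le (LinearMap.range Lm)
    have hcod : Module.finrank (ZMod 2) ((↥C → ZMod 2) × (↥C → ZMod 2))
        = (n - X.card) + (n - X.card) := by
      rw [Module.finrank_prod, Module.finrank_pi]
      simp [C, Fintype.card_coe, Finset.card_compl, hn]
    omega
  set a := Module.finrank (ZMod 2) K with ha
  have hrank : n ≤ a + 2 * (n - X.card) := by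
    rw [hfin] at h1; omega
  -- cardinality
  set KF : Finset (V → ZMod 2) := univ.filter (· ∈ K) with hKF
  have hc : KF.card = 2 ^ a := by
    have hft : Fintype.card ↥K = KF.card := Fintype.card_of_subtype KF (by simp [hKF])
    have h := Module.card_eq_pow_finrank (K := ZMod 2) (V := ↥K)
    rw [ZMod.card] at h
    rw [← hft, h]
  refine ⟨KF.card, a, hc, hrank, ?_⟩
  -- counting
  have h0K : (0 : V → ZMod 2) ∈ KF := by simp [hKF]
  set KF0 := KF.erase 0 with hKF0
  have hKF0card : KF0.card = KF.card - 1 := Finset.card_erase_of_mem h0K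
  set B : (V → ZMod 2) → Finset V := fun x => suppF x ∪ suppF ((adjM G).mulVec x) with hB
  have hBk : ∀ x ∈ KF0, k ≤ (B x).card := by
    intro x hx
    have hx0 : x ≠ 0 := (Finset.mem_erase.mp hx).1
    have hsupp : (suppF x).Nonempty := by
      obtain ⟨v, hv⟩ := Function.ne_iff.mp hx0
      refine ⟨v, ?_⟩
      simp only [suppF, Finset.mem_filter, Finset.mem_univ, true_and]
      simpa using hv
    have := hmin (suppF x) hsupp
    rwa [oddNbhd_suppF] at this
  have hBX : ∀ x ∈ KF, B x ⊆ X := by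
    intro x hx v hv
    by_contra hvX
    have h := hKmem x (by simpa [hKF] using hx) v hvX
    simp only [hB, suppF, Finset.mem_union, Finset.mem_filter, Finset.mem_univ, true_and] at hv
    tauto
  have hs1 : KF0.card * k ≤ ∑ x ∈ KF0, (B x).card := by
    calc KF0.card * k = ∑ _x ∈ KF0, k := by rw [Finset.sum_const, smul_eq_mul]
    _ ≤ ∑ x ∈ KF0, (B x).card := Finset.sum_le_sum hBk
  have hs2 : ∑ x ∈ KF0, (B x).card = ∑ v ∈ X, (KF0.filter fun x => v ∈ B x).card := by
    have hterm : ∀ x ∈ KF0, (B x).card = ∑ v ∈ X, if v ∈ B x then 1 else 0 := by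
      intro x hx
      rw [← Finset.card_filter]
      congr 1
      ext v
      simp only [Finset.mem_filter]
      exact ⟨fun h => ⟨hBX x (Finset.erase_subset _ _ hx) h, h⟩, fun h => h.2⟩
    rw [Finset.sum_congr rfl hterm, Finset.sum_comm]
    exact Finset.sum_congr rfl fun v _ => (Finset.card_filter _ _).symm
  have hs3 : ∀ v : V, 4 * (KF.filter fun x => v ∈ B x).card ≤ 3 * KF.card := by
    intro v
    set p : (V → ZMod 2) → ZMod 2 × ZMod 2 :=
      fun x => (x v, (adjM G).mulVec x v) with hp
    have hpadd : ∀ x y, p (x + y) = p x + p y := by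
      intro x y
      simp [hp, Matrix.mulVec_add, Prod.ext_iff]
    have hfib : KF.card = ∑ aa : ZMod 2 × ZMod 2, (KF.filter fun x => p x = aa).card :=
      Finset.card_eq_sum_card_fiberwise fun x _ => Finset.mem_univ _
    have hle : ∀ aa, (KF.filter fun x => p x = aa).card
        ≤ (KF.filter fun x => p x = 0).card := by
      intro aa
      rcases Finset.eq_empty_or_nonempty (KF.filter fun x => p x = aa) with h | ⟨x0, hx0⟩
      · simp [h]
      · simp only [Finset.mem_filter] at hx0
        apply Finset.card_le_card_of_injOn (fun x => x + x0)
        · intro x hx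
          simp only [Finset.mem_coe, Finset.mem_filter] at hx ⊢
          constructor
          · have hxK : x ∈ K := by simpa [hKF] using hx.1
            have hx0K : x0 ∈ K := by simpa [hKF] using hx0.1
            simp [hKF, K.add_mem hxK hx0K]
          · rw [hpadd, hx.2, hx0.2]
            exact zmod2sq_add_self aa
        · intro x _ y _ hxy
          exact add_left_injective x0 hxy
    have h4 : KF.card ≤ 4 * (KF.filter fun x => p x = 0).card := by
      rw [hfib]
      calc ∑ aa : ZMod 2 × ZMod 2, (KF.filter fun x => p x = aa).card
          ≤ ∑ _aa : ZMod 2 × ZMod 2, (KF.filter fun x => p x = 0).card :=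
            Finset.sum_le_sum fun aa _ => hle aa
      _ = 4 * (KF.filter fun x => p x = 0).card := by
            rw [Finset.sum_const, smul_eq_mul]
            congr 1
    have hsplit : (KF.filter fun x => v ∈ B x).card
        + (KF.filter fun x => p x = 0).card = KF.card := by
      have hiff : ∀ x, v ∈ B x ↔ ¬ (p x = 0) := by
        intro x
        simp only [hB, hp, Finset.mem_union, suppF, Finset.mem_filter, Finset.mem_univ,
          true_and, Prod.ext_iff, Prod.fst_zero, Prod.snd_zero]
        tauto
      have := Finset.card_filter_add_card_filter_not
        (s := KF) (p := fun x => p x = 0)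
      rw [Finset.filter_congr (fun x _ => by rw [hiff x])]
      omega
    omega
  have hfinal : 4 * (KF0.card * k) ≤ 3 * (X.card * KF.card) := by
    calc 4 * (KF0.card * k) ≤ 4 * ∑ x ∈ KF0, (B x).card := by
          exact Nat.mul_le_mul_left 4 hs1
    _ = ∑ v ∈ X, 4 * (KF0.filter fun x => v ∈ B x).card := by
          rw [hs2, Finset.mul_sum]
    _ ≤ ∑ _v ∈ X, 3 * KF.card := by
          refine Finset.sum_le_sum fun v _ => ?_
          refine le_trans ?_ (hs3 v)
          have : (KF0.filter fun x => v ∈ B x).card ≤ (KF.filter fun x => v ∈ B x).card :=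
            Finset.card_le_card (Finset.filter_subset_filter _ (Finset.erase_subset _ _))
          omega
    _ = 3 * (X.card * KF.card) := by
          rw [Finset.sum_const, smul_eq_mul]; ring
  rw [← hKF0card]
  exact hfinal



lemma add_four_le_pow (m : ℕ) : m + 4 ≤ 2 ^ (m + 2) := by
  induction m with
  | zero => norm_num
  | succ m ih =>
    have h : 1 ≤ 2 ^ (m + 2) := Nat.one_le_two_pow
    calc m + 1 + 4 ≤ 2 ^ (m + 2) + 1 := by omega
    _ ≤ 2 ^ (m + 2) + 2 ^ (m + 2) := by omega
    _ = 2 ^ (m + 3) := by ring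

lemma le_pow_sub_two {n : ℕ} (hn : 4 ≤ n) : n ≤ 2 ^ (n - 2) := by
  have := add_four_le_pow (n - 4)
  have h1 : n - 4 + 4 = n := by omega
  have h2 : n - 4 + 2 = n - 2 := by omega
  rwa [h1, h2] at this

lemma one_le_logb {n : ℕ} (hn : 2 ≤ n) : (1 : ℝ) ≤ Real.logb 2 n := by
  rw [show (1:ℝ) = Real.logb 2 2 from (Real.logb_self_eq_one (by norm_num)).symm]
  exact Real.logb_le_logb_of_le (by norm_num) (by norm_num) (by exact_mod_cast hn)

lemma arith_main (n d t c k : ℕ) (hn2 : 2 ≤ n) (hd2 : 2 ≤ d)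
    (h2t : 2 * t ≤ n + d + 1) (hcn : n ≤ c) (hc4 : 4 ≤ c)
    (hsmall : n ≤ 3 → d = 2)
    (hdL : (d : ℝ) ≤ Real.logb 2 n + 1)
    (hmain : 4 * ((c - 1) * k) ≤ 3 * (t * c)) :
    (k : ℝ) < 3 / 8 * n + Real.logb 2 n + 1 := by
  have hL1 : (1 : ℝ) ≤ Real.logb 2 n := one_le_logb hn2
  set L := Real.logb 2 n with hL
  by_cases hn3 : n ≤ 3
  · -- small case : d = 2, derive k ≤ t in ℕ
    have hde := hsmall hn3
    obtain ⟨e, hce⟩ : ∃ e, c = e + 1 := ⟨c - 1, by omega⟩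
    have he3 : 3 ≤ e := by omega
    have h' : 4 * (e * k) ≤ 3 * (t * e) + 3 * t := by
      have h0 : c - 1 = e := by omega
      have h1 : 3 * (t * c) = 3 * (t * e) + 3 * t := by rw [hce]; ring
      rw [h0] at hmain
      omega
    have hkt : k ≤ t := by
      by_contra hcon
      push_neg at hcon
      have q1 : e * (t + 1) ≤ e * k := Nat.mul_le_mul_left e hcon
      have q2 : 3 * t ≤ e * t := Nat.mul_le_mul_right t he3
      nlinarith [q1, q2, h']
    have hk2 : 2 * k ≤ n + 3 := by omega
    have hk2R : 2 * (k : ℝ) ≤ (n : ℝ) + 3 := by exact_mod_cast hk2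
    have hn3R : (n : ℝ) ≤ 3 := by exact_mod_cast hn3
    linarith
  · push_neg at hn3
    have hn4 : 4 ≤ n := hn3
    have hL2 : (2 : ℝ) ≤ L := by
      have h4 : Real.logb 2 ((2:ℝ) ^ (2:ℕ)) ≤ Real.logb 2 (n:ℝ) := by
        refine Real.logb_le_logb_of_le (by norm_num) (by positivity) ?_
        norm_num
        exact_mod_cast hn4
      rw [Real.logb_pow, Real.logb_self_eq_one (by norm_num)] at h4
      rw [hL]
      simpa using h4
    -- cast hypotheses to ℝ
    have hc1 : (1:ℕ) ≤ c := by omega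
    have hmainR : 4 * (((c : ℝ) - 1) * k) ≤ 3 * ((t : ℝ) * c) := by
      have := Nat.cast_le (α := ℝ) |>.mpr hmain
      push_cast [Nat.cast_sub hc1] at this
      linarith
    have htR : 2 * (t : ℝ) ≤ (n : ℝ) + d + 1 := by exact_mod_cast h2t
    have hcnR : (n : ℝ) ≤ c := by exact_mod_cast hcn
    have hc4R : (4 : ℝ) ≤ c := by exact_mod_cast hc4
    have hn4R : (4 : ℝ) ≤ n := by exact_mod_cast hn4
    have hcpos : (0 : ℝ) < (c : ℝ) - 1 := by linarith
    have step1 : (k : ℝ) * ((c : ℝ) - 1) ≤ 3 / 8 * ((n : ℝ) + L + 2) * c := by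
      have ht2 : (t : ℝ) ≤ ((n : ℝ) + L + 2) / 2 := by linarith
      nlinarith [mul_le_mul_of_nonneg_right ht2 (by positivity : (0:ℝ) ≤ (c:ℝ))]
    have step2 : 3 / 8 * ((n : ℝ) + L + 2) * c < (3 / 8 * n + L + 1) * ((c : ℝ) - 1) := by
      nlinarith [mul_nonneg (by linarith : (0:ℝ) ≤ (c:ℝ) - n)
          (by linarith : (0:ℝ) ≤ 5/8 * L + 1/4),
        mul_nonneg (by linarith : (0:ℝ) ≤ L - 2) (by linarith : (0:ℝ) ≤ 5/8 * n - 1)]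
    have : (k : ℝ) * ((c : ℝ) - 1) < (3 / 8 * n + L + 1) * ((c : ℝ) - 1) :=
      lt_of_le_of_lt step1 step2
    exact lt_of_mul_lt_mul_right this (le_of_lt hcpos)

end DlocAux

/-- For any finite simple graph `G` of order `n > 0`, `δ_loc(G) < (3/8) n + log₂ n`, where
`δ_loc(G) + 1 = min_{∅ ≠ D ⊆ V} |D ∪ Odd_G(D)|`. -/
theorem dloc_lt_three_eighths {V : Type*} [Fintype V] [DecidableEq V]
    (G : SimpleGraph V)
    (hn : 0 < Fintype.card V) (dloc : ℕ)
    (hd : dloc + 1 = sInf {m : ℕ | ∃ D : Finset V, D.Nonempty ∧ (D ∪ oddNbhd G D).card = m}) :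
    (dloc : ℝ) < (3 / 8 : ℝ) * (Fintype.card V : ℝ) + Real.logb 2 (Fintype.card V : ℝ) := by
  classical
  have hmin : ∀ D : Finset V, D.Nonempty → dloc + 1 ≤ (D ∪ oddNbhd G D).card := by
    intro D hD
    rw [hd]
    exact Nat.sInf_le ⟨D, hD, rfl⟩
  by_cases h1 : Fintype.card V = 1
  · obtain ⟨v⟩ : Nonempty V := Fintype.card_pos_iff.mp hn
    have h := hmin {v} ⟨v, Finset.mem_singleton_self v⟩
    have hle : ({v} ∪ oddNbhd G {v}).card ≤ 1 := by
      have h2 := Finset.card_le_univ ({v} ∪ oddNbhd G {v})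
      rwa [h1] at h2
    have hz : dloc = 0 := by omega
    rw [hz, h1]
    simp [Real.logb_one]
  · have hn2 : 2 ≤ Fintype.card V := by omega
    set n := Fintype.card V with hnn
    set d := max 2 (Nat.clog 2 n) with hdd
    have hd2 : 2 ≤ d := le_max_left _ _
    have hclog : Nat.clog 2 n ≤ n := by
      rw [Nat.clog_le_iff_le_pow (by norm_num)]
      exact (Nat.lt_two_pow_self (n := n)).le
    have hdn : d ≤ n := max_le hn2 hclog
    set t := (n + d + 1) / 2 with ht
    have h2tl : n + d ≤ 2 * t := by omega
    have h2tr : 2 * t ≤ n + d + 1 := by omega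
    have htn : t ≤ n := by omega
    obtain ⟨X, hXsub, hXcard⟩ := Finset.exists_subset_card_eq (s := (univ : Finset V)) (n := t)
      (by rw [Finset.card_univ]; exact htn)
    obtain ⟨c, a, hca, hrank, hmain⟩ := DlocAux.key G (dloc + 1) hmin X
    rw [hXcard] at hrank hmain
    have had : d ≤ a := by omega
    have hc2d : 2 ^ d ≤ c := by
      rw [hca]; exact Nat.pow_le_pow_right (by norm_num) had
    have hcn : n ≤ c :=
      le_trans (le_trans (Nat.le_pow_clog (by norm_num) n)
        (Nat.pow_le_pow_right (by norm_num) (le_max_right _ _))) hc2d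
    have hc4 : 4 ≤ c := by
      calc (4:ℕ) = 2 ^ 2 := by norm_num
      _ ≤ 2 ^ d := Nat.pow_le_pow_right (by norm_num) hd2
      _ ≤ c := hc2d
    have hsmall : n ≤ 3 → d = 2 := by
      intro h3
      have hcl : Nat.clog 2 n ≤ 2 := by
        rw [Nat.clog_le_iff_le_pow (by norm_num)]
        omega
      rw [hdd]
      exact max_eq_left hcl
    have hdL : (d : ℝ) ≤ Real.logb 2 n + 1 := by
      rcases le_or_gt (Nat.clog 2 n) 2 with h | h
      · have hde : d = 2 := max_eq_left h
        rw [hde]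
        have := DlocAux.one_le_logb hn2
        push_cast
        linarith
      · have hdc : d = Nat.clog 2 n := max_eq_right (by omega)
        have hpow : 2 ^ (Nat.clog 2 n - 1) < n :=
          Nat.pow_pred_clog_lt_self (by norm_num) (by omega)
        have hcast : ((2:ℕ) ^ (Nat.clog 2 n - 1) : ℝ) < (n : ℝ) := by exact_mod_cast hpow
        have hlt : Real.logb 2 ((2:ℝ) ^ (Nat.clog 2 n - 1 : ℕ)) < Real.logb 2 (n : ℝ) := by
          refine Real.logb_lt_logb (by norm_num) (by positivity) ?_
          push_cast at hcast ⊢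
          exact hcast
        rw [Real.logb_pow, Real.logb_self_eq_one (by norm_num), mul_one] at hlt
        have hc1 : ((Nat.clog 2 n - 1 : ℕ) : ℝ) = (Nat.clog 2 n : ℝ) - 1 := by
          have : 1 ≤ Nat.clog 2 n := by omega
          push_cast [Nat.cast_sub this]
          ring
        rw [hc1] at hlt
        rw [hdc]
        linarith
    have hfin := DlocAux.arith_main n d t c (dloc + 1) hn2 hd2 h2tr hcn hc4 hsmall hdL hmain
    push_cast at hfin
    linarith
end

section
/- Let G be a finite simple graph on n vertices and S a subset of its vertex set. The collection {D ⊆ S : Odd_G(D) ⊆ S}, identified with its indicator vectors in (ZMod 2)^V, is a linear subspace over the field with two elements of dimension at least 2·|S| − n. -/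
open Finset

open Classical in
lemma mulVec_indicator {V : Type*} [Fintype V] [DecidableEq V] (G : SimpleGraph V)
    (D : Finset V) (v : V) :
    (G.adjMatrix (ZMod 2)).mulVec (fun u => if u ∈ D then 1 else 0) v
      = ((D.filter fun u => G.Adj v u).card : ZMod 2) := by
  classical
  unfold Matrix.mulVec dotProduct
  simp only [SimpleGraph.adjMatrix_apply]
  rw [Finset.sum_congr rfl (fun u _ => by
    show (if G.Adj v u then (1:ZMod 2) else 0) * (if u ∈ D then 1 else 0)
      = if u ∈ D.filter (fun u => G.Adj v u) then 1 else 0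
    by_cases h1 : G.Adj v u <;> by_cases h2 : u ∈ D <;> simp [h1, h2])]
  rw [Finset.sum_ite_mem, Finset.univ_inter, Finset.sum_const, nsmul_eq_mul, mul_one]

/-- For a finite simple graph `G` on `n` vertices and a set `S` of vertices, the collection
`{D ⊆ S : Odd_G(D) ⊆ S}`, identified with indicator vectors in `(ZMod 2)^V`, is a linear
subspace over `ZMod 2` of dimension at least `2|S| - n`. -/
theorem kernel_dimension_bound {V : Type*} [Fintype V] [DecidableEq V]
    (G : SimpleGraph V) (S : Finset V) :
    ∃ W : Submodule (ZMod 2) (V → ZMod 2),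
      (∀ f : V → ZMod 2, f ∈ W ↔
        ∃ D : Finset V, D ⊆ S ∧ oddNbhd G D ⊆ S ∧ f = fun v => if v ∈ D then 1 else 0) ∧
      (2 * S.card : ℤ) - (Fintype.card V : ℤ) ≤ (Module.finrank (ZMod 2) W : ℤ) := by
  classical
  set A := (G.adjMatrix (ZMod 2)).mulVecLin with hA
  set R : (V → ZMod 2) →ₗ[ZMod 2] ({v : V // v ∉ S} → ZMod 2) :=
    LinearMap.funLeft (ZMod 2) (ZMod 2) Subtype.val with hR
  set L := R.prod (R.comp A) with hL
  refine ⟨LinearMap.ker L, ?_, ?_⟩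
  · intro f
    constructor
    · intro hf
      rw [LinearMap.mem_ker, hL, LinearMap.prod_apply, Prod.mk_eq_zero] at hf
      obtain ⟨h1, h2⟩ := hf
      have hf0 : ∀ v, v ∉ S → f v = 0 := fun v hv => congrFun h1 ⟨v, hv⟩
      have hf2 : ∀ v, v ∉ S → A f v = 0 := fun v hv => congrFun h2 ⟨v, hv⟩
      have hx : ∀ x : ZMod 2, x = if x = 1 then 1 else 0 := by decide
      refine ⟨Finset.univ.filter (fun v => f v = 1), ?_, ?_, ?_⟩
      · intro v hv
        simp only [Finset.mem_filter, Finset.mem_univ, true_and] at hv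
        by_contra hvS
        rw [hf0 v hvS] at hv
        exact one_ne_zero hv.symm
      · intro v hv
        by_contra hvS
        simp only [oddNbhd, Finset.mem_filter, Finset.mem_univ, true_and] at hv
        have hfi : f = fun u => if u ∈ Finset.univ.filter (fun v => f v = 1) then 1 else 0 := by
          funext u
          simp only [Finset.mem_filter, Finset.mem_univ, true_and]
          exact hx (f u)
        have := hf2 v hvS
        rw [hA, Matrix.mulVecLin_apply, hfi, mulVec_indicator] at this
        rw [ZMod.natCast_eq_zero_iff] at this
        have h1 := Nat.odd_iff.mp hv
        omega
      · funext u
        simp only [Finset.mem_filter, Finset.mem_univ, true_and]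
        exact hx (f u)
    · rintro ⟨D, hDS, hOdd, rfl⟩
      rw [LinearMap.mem_ker, hL, LinearMap.prod_apply, Prod.mk_eq_zero]
      constructor
      · funext v
        obtain ⟨v, hv⟩ := v
        show (if v ∈ D then (1 : ZMod 2) else 0) = 0
        rw [if_neg (fun h => hv (hDS h))]
      · funext v
        obtain ⟨v, hv⟩ := v
        show (G.adjMatrix (ZMod 2)).mulVec (fun u => if u ∈ D then (1 : ZMod 2) else 0) v = 0
        rw [mulVec_indicator]
        have : v ∉ oddNbhd G D := fun h => hv (hOdd h)
        simp only [oddNbhd, Finset.mem_filter, Finset.mem_univ, true_and] at this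
        rw [Nat.not_odd_iff_even] at this
        rw [ZMod.natCast_eq_zero_iff]
        exact this.two_dvd
  · have hrn := LinearMap.finrank_range_add_finrank_ker L
    have hcod : Module.finrank (ZMod 2) (({v : V // v ∉ S} → ZMod 2) × ({v : V // v ∉ S} → ZMod 2))
        = 2 * (Fintype.card V - S.card) := by
      rw [Module.finrank_prod, Module.finrank_pi]
      have : Fintype.card {v : V // v ∉ S} = Fintype.card V - S.card := by
        rw [Fintype.card_subtype_compl, Fintype.card_coe]
      omega
    have hle : Module.finrank (ZMod 2) (LinearMap.range L)
        ≤ 2 * (Fintype.card V - S.card) := by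
      rw [← hcod]
      exact Submodule.finrank_le _
    have hdom : Module.finrank (ZMod 2) (V → ZMod 2) = Fintype.card V := by
      rw [Module.finrank_pi]
    have hSle : S.card ≤ Fintype.card V := Finset.card_le_univ S
    omega
end

section
/- Let G be a finite simple graph on n vertices, let k be an integer with 0 < k < n/2, and let S be any set of exactly ⌊n/2⌋ + k vertices. Then there exists a nonempty set F ⊆ S with F ∪ Odd_G(F) ⊆ S and |F ∪ Odd_G(F)| ≤ (3/4)·(⌊n/2⌋ + k)/(1 − 2^{1−2k}). -/
open Finset

namespace OddAux

open Classical

variable {V : Type*} [Fintype V] [DecidableEq V]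

noncomputable def Ax (G : SimpleGraph V) (S : Finset V) (x : V → ZMod 2) (v : V) : ZMod 2 :=
  ∑ u ∈ S, if G.Adj v u then x u else 0

lemma Ax_add (G : SimpleGraph V) (S : Finset V) (x y : V → ZMod 2) (v : V) :
    Ax G S (x + y) v = Ax G S x v + Ax G S y v := by
  simp only [Ax, Pi.add_apply, ← Finset.sum_add_distrib]
  exact Finset.sum_congr rfl fun u _ => by split <;> simp

lemma Ax_smul (G : SimpleGraph V) (S : Finset V) (c : ZMod 2) (x : V → ZMod 2) (v : V) :
    Ax G S (c • x) v = c * Ax G S x v := by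
  simp only [Ax, Pi.smul_apply, smul_eq_mul, Finset.mul_sum]
  exact Finset.sum_congr rfl fun u _ => by split <;> simp

noncomputable def phi (G : SimpleGraph V) (S : Finset V) :
    (V → ZMod 2) →ₗ[ZMod 2] ({v : V // v ∉ S} → ZMod 2) × ({v : V // v ∉ S} → ZMod 2) where
  toFun x := (fun w => x w.1, fun w => Ax G S x w.1)
  map_add' x y := by
    refine Prod.ext ?_ ?_ <;> funext w <;> simp [Ax_add]
  map_smul' c x := by
    refine Prod.ext ?_ ?_ <;> funext w <;> simp [Ax_smul]

noncomputable def psi (G : SimpleGraph V) (S : Finset V) (v : V) :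
    (V → ZMod 2) →ₗ[ZMod 2] ZMod 2 × ZMod 2 where
  toFun x := (x v, Ax G S x v)
  map_add' x y := by simp [Ax_add, Prod.ext_iff]
  map_smul' c x := by simp [Ax_smul, Prod.ext_iff]

noncomputable def Fset (x : V → ZMod 2) : Finset V := univ.filter fun v => x v ≠ 0

lemma mem_Fset {x : V → ZMod 2} {v : V} : v ∈ Fset x ↔ x v ≠ 0 := by simp [Fset]

lemma cast_ne_zero_iff (n : ℕ) : (n : ZMod 2) ≠ 0 ↔ Odd n := by
  rw [Ne, ZMod.natCast_eq_zero_iff, Nat.odd_iff, Nat.two_dvd_ne_zero]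

lemma Ax_eq_card (G : SimpleGraph V) (S : Finset V) (x : V → ZMod 2)
    (hx : ∀ u, x u ≠ 0 → u ∈ S) (v : V) :
    Ax G S x v = (((Fset x).filter fun u => G.Adj v u).card : ZMod 2) := by
  have h1 : Ax G S x v = ∑ u ∈ S.filter fun u => G.Adj v u, x u :=
    (Finset.sum_filter _ _).symm
  have h2 : ∑ u ∈ S.filter (fun u => G.Adj v u), x u
      = ∑ u ∈ (S.filter fun u => G.Adj v u).filter (fun u => x u ≠ 0), x u :=
    (Finset.sum_filter_ne_zero _).symm
  have h3 : (S.filter fun u => G.Adj v u).filter (fun u => x u ≠ 0)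
      = (Fset x).filter fun u => G.Adj v u := by
    ext u
    have := hx u
    simp only [Finset.mem_filter, mem_Fset]
    tauto
  have h4 : ∀ u ∈ (Fset x).filter (fun u => G.Adj v u), x u = 1 := by
    intro u hu
    have hu' : x u ≠ 0 := mem_Fset.1 (Finset.mem_filter.1 hu).1
    revert hu'
    generalize x u = a
    revert a; decide
  rw [h1, h2, h3, Finset.sum_congr rfl h4, Finset.sum_const, nsmul_eq_mul, mul_one]

lemma mem_U_iff (G : SimpleGraph V) (S : Finset V) (x : V → ZMod 2)
    (hx : ∀ u, x u ≠ 0 → u ∈ S) (v : V) :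
    v ∈ Fset x ∪ oddNbhd G (Fset x) ↔ psi G S v x ≠ 0 := by
  rw [Finset.mem_union, mem_Fset]
  have ho : v ∈ oddNbhd G (Fset x) ↔ Ax G S x v ≠ 0 := by
    simp only [oddNbhd, Finset.mem_filter, Finset.mem_univ, true_and]
    rw [Ax_eq_card G S x hx v, cast_ne_zero_iff]
  rw [ho]
  show _ ↔ (x v, Ax G S x v) ≠ 0
  simp only [Ne, Prod.mk_eq_zero, not_and_or]

end OddAux
set_option maxHeartbeats 1000000 in
set_option synthInstance.maxHeartbeats 400000 in
/-- Let `G` be a finite simple graph on `n` vertices, `0 < k < n/2`, and let `S` be a set of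
exactly `⌊n/2⌋ + k` vertices. Then there is a nonempty `F ⊆ S` with `F ∪ Odd_G(F) ⊆ S` and
`|F ∪ Odd_G(F)| ≤ (3/4) (⌊n/2⌋ + k) / (1 - 2^{1-2k})`. -/
theorem exists_small_closed_set_in_large_cut {V : Type*} [Fintype V] [DecidableEq V]
    (G : SimpleGraph V) (k : ℕ) (hk0 : 0 < k)
    (hk : (k : ℝ) < (Fintype.card V : ℝ) / 2)
    (S : Finset V) (hS : S.card = Fintype.card V / 2 + k) :
    ∃ F : Finset V, F.Nonempty ∧ F ⊆ S ∧ F ∪ oddNbhd G F ⊆ S ∧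
      ((F ∪ oddNbhd G F).card : ℝ) ≤
        (3 / 4 : ℝ) * ((Fintype.card V / 2 + k : ℕ) : ℝ) /
          (1 - (2 : ℝ) ^ ((1 : ℤ) - 2 * (k : ℤ))) := by
  classical
  haveI : Fact (Nat.Prime 2) := ⟨Nat.prime_two⟩
  set n := Fintype.card V with hn
  have hSle : S.card ≤ n := by simpa [hn] using Finset.card_le_univ S
  have h2k : 2 * k < n := by
    have h2 : (2 * k : ℝ) < n := by
      rw [lt_div_iff₀ (by norm_num : (0:ℝ) < 2)] at hk; linarith
    exact_mod_cast h2
  obtain ⟨X, hX⟩ : ∃ X, X = LinearMap.ker (OddAux.phi G S) := ⟨_, rfl⟩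
  -- dimension count
  have hdom : Module.finrank (ZMod 2) (V → ZMod 2) = n := by
    rw [Module.finrank_pi, hn]
  have hcompl : Fintype.card {v : V // v ∉ S} = n - S.card := by
    rw [Fintype.card_subtype_compl]
    congr 1
    exact Fintype.card_coe S
  have hrange : Module.finrank (ZMod 2) (LinearMap.range (OddAux.phi G S))
      ≤ 2 * (n - S.card) := by
    have h1 := Submodule.finrank_le (LinearMap.range (OddAux.phi G S))
    have h2 : Module.finrank (ZMod 2)
        (({v : V // v ∉ S} → ZMod 2) × ({v : V // v ∉ S} → ZMod 2)) = 2 * (n - S.card) := by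
      rw [Module.finrank_prod, Module.finrank_pi, hcompl]; ring
    omega
  have hrk : Module.finrank (ZMod 2) (LinearMap.range (OddAux.phi G S))
      + Module.finrank (ZMod 2) X = n := by
    rw [hX, LinearMap.finrank_range_add_finrank_ker, hdom]
  set d := Module.finrank (ZMod 2) X with hd
  have hdge : 2 * k - 1 ≤ d := by omega
  have hcardX : Fintype.card X = 2 ^ d := by
    simpa [ZMod.card] using Module.card_eq_pow_finrank (K := ZMod 2) (V := X)
  -- membership facts for elements of X
  have hker : ∀ x : X, OddAux.phi G S (x : V → ZMod 2) = 0 :=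
    fun x => LinearMap.mem_ker.1 (hX ▸ x.2)
  have hsupp : ∀ x : X, ∀ u, (x : V → ZMod 2) u ≠ 0 → u ∈ S := by
    intro x u hu
    by_contra hus
    exact hu (congrFun (congrArg Prod.fst (hker x)) ⟨u, hus⟩)
  have hAx0 : ∀ x : X, ∀ u, u ∉ S → OddAux.Ax G S (x : V → ZMod 2) u = 0 := by
    intro x u hus
    exact congrFun (congrArg Prod.snd (hker x)) ⟨u, hus⟩
  obtain ⟨U, hU⟩ : ∃ U : X → Finset V, U = fun x : X =>
      OddAux.Fset (x : V → ZMod 2) ∪ oddNbhd G (OddAux.Fset (x : V → ZMod 2)) := ⟨_, rfl⟩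
  have hUsub : ∀ x : X, U x ⊆ S := by
    intro x v hv
    rw [hU] at hv
    rcases Finset.mem_union.1 hv with h | h
    · exact hsupp x v (OddAux.mem_Fset.1 h)
    · by_contra hvs
      have h1 : OddAux.Ax G S (x : V → ZMod 2) v ≠ 0 := by
        rw [OddAux.Ax_eq_card G S _ (hsupp x) v, OddAux.cast_ne_zero_iff]
        simpa [oddNbhd] using h
      exact h1 (hAx0 x v hvs)
  have hUmem : ∀ (x : X) (v : V),
      v ∈ U x ↔ OddAux.psi G S v (x : V → ZMod 2) ≠ 0 := by
    intro x v
    rw [hU]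
    exact OddAux.mem_U_iff G S _ (hsupp x) v
  -- per-vertex counting
  have hpsicard : ∀ v : V, Fintype.card X
      ≤ 4 * (univ.filter fun x : X => OddAux.psi G S v (x : V → ZMod 2) = 0).card := by
    intro v
    obtain ⟨ψ, hψ⟩ : ∃ ψ, ψ = (OddAux.psi G S v).comp (Submodule.subtype X) := ⟨_, rfl⟩
    haveI : Nonempty {x : X // ψ x = 0} := ⟨⟨0, map_zero ψ⟩⟩
    haveI : Fintype (LinearMap.ker ψ) := Fintype.ofFinite _
    haveI : Fintype {x : X // OddAux.psi G S v (x : V → ZMod 2) = 0} := Fintype.ofFinite _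
    have h1 : Fintype.card (LinearMap.ker ψ)
        = (univ.filter fun x : X => OddAux.psi G S v (x : V → ZMod 2) = 0).card := by
      have e2 : Fintype.card (LinearMap.ker ψ)
          = Fintype.card {x : X // OddAux.psi G S v (x : V → ZMod 2) = 0} :=
        Fintype.card_congr (Equiv.subtypeEquivRight fun x => by
          rw [LinearMap.mem_ker, hψ]; simp)
      rw [e2]
      exact Fintype.card_of_subtype _ fun x => by simp
    have hr : Module.finrank (ZMod 2) (LinearMap.range ψ)
        + Module.finrank (ZMod 2) (LinearMap.ker ψ) = d := by
      rw [hd, LinearMap.finrank_range_add_finrank_ker]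
    have hr2 : Module.finrank (ZMod 2) (LinearMap.range ψ) ≤ 2 := by
      have h3 := Submodule.finrank_le (LinearMap.range ψ)
      have h4 : Module.finrank (ZMod 2) (ZMod 2 × ZMod 2) = 2 := by
        rw [Module.finrank_prod, Module.finrank_self]
      omega
    have hck : Fintype.card (LinearMap.ker ψ)
        = 2 ^ Module.finrank (ZMod 2) (LinearMap.ker ψ) := by
      simpa [ZMod.card] using Module.card_eq_pow_finrank (K := ZMod 2) (V := LinearMap.ker ψ)
    rw [← h1, hck, hcardX, ← hr, pow_add]
    have h5 : 2 ^ Module.finrank (ZMod 2) (LinearMap.range ψ) ≤ 4 := by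
      calc 2 ^ Module.finrank (ZMod 2) (LinearMap.range ψ) ≤ 2 ^ 2 :=
            Nat.pow_le_pow_right (by norm_num) hr2
        _ = 4 := by norm_num
    exact Nat.mul_le_mul_right _ h5
  -- double counting
  have hUcard : ∀ x : X, (U x).card = ∑ v ∈ S, if v ∈ U x then 1 else 0 := by
    intro x
    have h5 : S.filter (fun v => v ∈ U x) = U x := by
      ext v
      simp only [Finset.mem_filter]
      exact ⟨fun h => h.2, fun h => ⟨hUsub x h, h⟩⟩
    calc (U x).card = (S.filter (fun v => v ∈ U x)).card := by rw [h5]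
      _ = ∑ v ∈ S, if v ∈ U x then 1 else 0 := Finset.card_filter _ _
  have hswap : ∑ x : X, (U x).card
      = ∑ v ∈ S, (univ.filter fun x : X => v ∈ U x).card := by
    calc ∑ x : X, (U x).card = ∑ x : X, ∑ v ∈ S, if v ∈ U x then 1 else 0 :=
          Finset.sum_congr rfl fun x _ => hUcard x
      _ = ∑ v ∈ S, ∑ x : X, if v ∈ U x then 1 else 0 := Finset.sum_comm
      _ = ∑ v ∈ S, (univ.filter fun x : X => v ∈ U x).card :=
          Finset.sum_congr rfl fun v _ => (Finset.card_filter _ _).symm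
  have hv34 : ∀ v ∈ S, 4 * (univ.filter fun x : X => v ∈ U x).card
      ≤ 3 * Fintype.card X := by
    intro v _
    have heq : (univ.filter fun x : X => v ∈ U x)
        = univ.filter fun x : X => ¬ OddAux.psi G S v (x : V → ZMod 2) = 0 :=
      Finset.filter_congr fun x _ => hUmem x v
    have hsplit := Finset.card_filter_add_card_filter_not
      (s := (univ : Finset X)) (p := fun x : X => OddAux.psi G S v (x : V → ZMod 2) = 0)
    rw [Finset.card_univ] at hsplit
    have h4 := hpsicard v
    rw [heq]
    omega
  have htot : 4 * ∑ x : X, (U x).card ≤ 3 * S.card * Fintype.card X := by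
    rw [hswap, Finset.mul_sum]
    calc ∑ v ∈ S, 4 * (univ.filter fun x : X => v ∈ U x).card
        ≤ ∑ v ∈ S, 3 * Fintype.card X := Finset.sum_le_sum hv34
      _ = S.card * (3 * Fintype.card X) := by rw [Finset.sum_const, smul_eq_mul]
      _ = 3 * S.card * Fintype.card X := by ring
  -- a minimal nonzero element
  have hd1 : 1 ≤ d := by omega
  have hX2 : 2 ≤ Fintype.card X := by
    rw [hcardX]
    calc 2 = 2 ^ 1 := (pow_one 2).symm
      _ ≤ 2 ^ d := Nat.pow_le_pow_right (by norm_num) hd1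
  have hTcard : (univ.filter (fun x : X => x ≠ 0)).card = Fintype.card X - 1 := by
    rw [Finset.filter_ne', Finset.card_erase_of_mem (Finset.mem_univ _), Finset.card_univ]
  have hTne : (univ.filter (fun x : X => x ≠ 0)).Nonempty := Finset.card_pos.1 (by omega)
  obtain ⟨x₀, hx₀T, hmin⟩ :=
    (univ.filter (fun x : X => x ≠ 0)).exists_min_image (fun x => (U x).card) hTne
  have hlow : (Fintype.card X - 1) * (U x₀).card ≤ ∑ x : X, (U x).card := by
    calc (Fintype.card X - 1) * (U x₀).card
        = ∑ _x ∈ univ.filter (fun x : X => x ≠ 0), (U x₀).card := by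
          rw [Finset.sum_const, smul_eq_mul, hTcard]
      _ ≤ ∑ x ∈ univ.filter (fun x : X => x ≠ 0), (U x).card :=
          Finset.sum_le_sum fun x hx => hmin x hx
      _ ≤ ∑ x : X, (U x).card := Finset.sum_le_sum_of_subset (Finset.subset_univ _)
  have key : 4 * ((2 ^ d - 1) * (U x₀).card) ≤ 3 * S.card * 2 ^ d := by
    calc 4 * ((2 ^ d - 1) * (U x₀).card)
        = 4 * ((Fintype.card X - 1) * (U x₀).card) := by rw [hcardX]
      _ ≤ 4 * ∑ x : X, (U x).card := Nat.mul_le_mul_left _ hlow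
      _ ≤ 3 * S.card * Fintype.card X := htot
      _ = 3 * S.card * 2 ^ d := by rw [hcardX]
  -- produce F
  have hx₀ne : x₀ ≠ 0 := (Finset.mem_filter.1 hx₀T).2
  have hFne : (OddAux.Fset (x₀ : V → ZMod 2)).Nonempty := by
    by_contra hemp
    apply hx₀ne
    apply Subtype.ext
    funext v
    have hv : v ∉ OddAux.Fset (x₀ : V → ZMod 2) := fun h => hemp ⟨v, h⟩
    have := OddAux.mem_Fset.not.1 hv
    simpa using this
  have hshow : OddAux.Fset (x₀ : V → ZMod 2) ∪ oddNbhd G (OddAux.Fset (x₀ : V → ZMod 2))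
      = U x₀ := by rw [hU]
  refine ⟨OddAux.Fset (x₀ : V → ZMod 2), hFne,
    fun v hv => hsupp x₀ v (OddAux.mem_Fset.1 hv), hshow ▸ hUsub x₀, ?_⟩
  rw [hshow]
  set m := (U x₀).card with hm
  -- the numerical bound
  set e := 2 * k - 1 with he
  have hde : e ≤ d := hdge
  have he1 : 1 ≤ e := by omega
  have hexp : (2 : ℝ) ^ ((1 : ℤ) - 2 * (k : ℤ)) = ((2 : ℝ) ^ e)⁻¹ := by
    have h9 : (1 : ℤ) - 2 * (k : ℤ) = -(e : ℤ) := by rw [he]; push_cast; omega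
    rw [h9, zpow_neg, zpow_natCast]
  have hE2 : (2 : ℝ) ≤ (2 : ℝ) ^ e := by
    calc (2 : ℝ) = 2 ^ 1 := (pow_one 2).symm
      _ ≤ 2 ^ e := pow_le_pow_right₀ (by norm_num) he1
  have hE0 : (0 : ℝ) < (2 : ℝ) ^ e := by positivity
  have hEN : (2 : ℝ) ^ e ≤ (2 : ℝ) ^ d := pow_le_pow_right₀ (by norm_num) hde
  have hD0 : (0 : ℝ) < 1 - ((2 : ℝ) ^ e)⁻¹ := by
    have h10 : ((2 : ℝ) ^ e)⁻¹ < 1 := inv_lt_one_of_one_lt₀ (by linarith)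
    linarith
  rw [hexp, ← hS, le_div_iff₀ hD0]
  -- cast the key inequality to ℝ
  have h1 : (1 : ℕ) ≤ 2 ^ d := Nat.one_le_two_pow
  have h11 : 4 * (((2 : ℝ) ^ d - 1) * m) ≤ 3 * S.card * 2 ^ d := by
    have h12 := (Nat.cast_le (α := ℝ)).2 key
    push_cast [Nat.cast_sub h1] at h12
    convert h12 using 2 <;> push_cast <;> ring
  have hm0 : (0 : ℝ) ≤ (m : ℝ) := Nat.cast_nonneg m
  have hs0 : (0 : ℝ) ≤ (S.card : ℝ) := Nat.cast_nonneg _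
  have hN1 : (1 : ℝ) < (2 : ℝ) ^ d := lt_of_lt_of_le (by linarith) hEN
  have hint1 : (0 : ℝ) ≤ ((2 : ℝ) ^ e - 1)
      * (3 * S.card * 2 ^ d - 4 * (((2 : ℝ) ^ d - 1) * m)) :=
    mul_nonneg (by linarith) (by linarith)
  have hint2 : (0 : ℝ) ≤ 3 * (S.card : ℝ) * ((2 : ℝ) ^ d - (2 : ℝ) ^ e) :=
    mul_nonneg (by linarith) (by linarith)
  have h12 : 4 * (m : ℝ) * ((2 : ℝ) ^ e - 1) * ((2 : ℝ) ^ d - 1)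
      ≤ 3 * S.card * (2 : ℝ) ^ e * ((2 : ℝ) ^ d - 1) := by nlinarith [hint1, hint2]
  have h13 : 4 * (m : ℝ) * ((2 : ℝ) ^ e - 1) ≤ 3 * S.card * (2 : ℝ) ^ e :=
    le_of_mul_le_mul_right h12 (by linarith)
  have h14 : (m : ℝ) * (1 - ((2 : ℝ) ^ e)⁻¹) = m * ((2 : ℝ) ^ e - 1) / 2 ^ e := by
    field_simp
  rw [h14, div_le_iff₀ hE0]
  linarith
end

section
/- Let G be a finite bipartite graph with parts V1 and V2 and a nonempty vertex set. Then the minimum of |D ∪ Odd_G(D)| over all nonempty subsets D of the vertex set is equal to the minimum of |D ∪ Odd_G(D)| over all nonempty subsets D that are entirely contained in V1 or entirely contained in V2. -/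
open Finset

open Classical in
lemma side_subset_aux {V : Type*} [Fintype V] [DecidableEq V]
    (G : SimpleGraph V) (V1 V2 : Finset V) (hdisj : Disjoint V1 V2)
    (hbip : ∀ u v : V, G.Adj u v → (u ∈ V1 ∧ v ∈ V2) ∨ (u ∈ V2 ∧ v ∈ V1))
    (D : Finset V) :
    (D ∩ V1) ∪ oddNbhd G (D ∩ V1) ⊆ D ∪ oddNbhd G D := by
  intro v hv
  rcases Finset.mem_union.1 hv with hv | hv
  · exact Finset.mem_union.2 (Or.inl (Finset.mem_inter.1 hv).1)
  · simp only [oddNbhd, Finset.mem_filter, Finset.mem_univ, true_and] at hv ⊢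
    -- v has an odd number of neighbours in D ∩ V1, so at least one
    have hpos : 0 < ((D ∩ V1).filter fun u => G.Adj v u).card := hv.pos
    obtain ⟨u, hu⟩ := Finset.card_pos.1 hpos
    rw [Finset.mem_filter, Finset.mem_inter] at hu
    have hv2 : v ∈ V2 := by
      rcases hbip v u hu.2 with ⟨h1, h2⟩ | ⟨h1, h2⟩
      · exact absurd hu.1.2 (Finset.disjoint_right.1 hdisj h2)
      · exact h1
    have hkey : (D.filter fun u => G.Adj v u) = ((D ∩ V1).filter fun u => G.Adj v u) := by
      ext w
      simp only [Finset.mem_filter, Finset.mem_inter]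
      constructor
      · rintro ⟨hw, hadj⟩
        refine ⟨⟨hw, ?_⟩, hadj⟩
        rcases hbip v w hadj with ⟨h1, h2⟩ | ⟨h1, h2⟩
        · exact absurd hv2 (Finset.disjoint_left.1 hdisj h1)
        · exact h2
      · rintro ⟨⟨hw, _⟩, hadj⟩; exact ⟨hw, hadj⟩
    refine Finset.mem_union.2 (Or.inr ?_)
    simpa only [oddNbhd, Finset.mem_filter, Finset.mem_univ, true_and, hkey] using hv

/-- For a finite bipartite graph `G` with parts `V1`, `V2` and a nonempty vertex set, the minimum
of `|D ∪ Odd_G(D)|` over nonempty subsets `D` of the vertex set equals the minimum over nonempty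
subsets `D` entirely contained in `V1` or in `V2`. -/
theorem bipartite_min_restrict_to_sides {V : Type*} [Fintype V] [DecidableEq V] [Nonempty V]
    (G : SimpleGraph V)
    (V1 V2 : Finset V) (hdisj : Disjoint V1 V2) (hcover : V1 ∪ V2 = Finset.univ)
    (hbip : ∀ u v : V, G.Adj u v → (u ∈ V1 ∧ v ∈ V2) ∨ (u ∈ V2 ∧ v ∈ V1)) :
    sInf {m : ℕ | ∃ D : Finset V, D.Nonempty ∧ (D ∪ oddNbhd G D).card = m} =
      sInf {m : ℕ | ∃ D : Finset V, D.Nonempty ∧ (D ⊆ V1 ∨ D ⊆ V2) ∧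
        (D ∪ oddNbhd G D).card = m} := by
  set S := {m : ℕ | ∃ D : Finset V, D.Nonempty ∧ (D ∪ oddNbhd G D).card = m}
  set T := {m : ℕ | ∃ D : Finset V, D.Nonempty ∧ (D ⊆ V1 ∨ D ⊆ V2) ∧
      (D ∪ oddNbhd G D).card = m}
  have hST : T ⊆ S := by rintro m ⟨D, hD, _, hm⟩; exact ⟨D, hD, hm⟩
  have hSne : S.Nonempty := by
    obtain ⟨v⟩ := ‹Nonempty V›
    exact ⟨_, {v}, Finset.singleton_nonempty v, rfl⟩
  have hTne : T.Nonempty := by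
    obtain ⟨v⟩ := ‹Nonempty V›
    have : v ∈ V1 ∪ V2 := by rw [hcover]; exact Finset.mem_univ v
    rcases Finset.mem_union.1 this with h | h
    · exact ⟨_, {v}, Finset.singleton_nonempty v,
        Or.inl (Finset.singleton_subset_iff.2 h), rfl⟩
    · exact ⟨_, {v}, Finset.singleton_nonempty v,
        Or.inr (Finset.singleton_subset_iff.2 h), rfl⟩
  apply le_antisymm
  · exact Nat.sInf_le (hST (Nat.sInf_mem hTne))
  · obtain ⟨D, hD, hm⟩ := Nat.sInf_mem hSne
    -- one of D ∩ V1, D ∩ V2 is nonempty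
    have hcases : (D ∩ V1).Nonempty ∨ (D ∩ V2).Nonempty := by
      obtain ⟨v, hv⟩ := hD
      have : v ∈ V1 ∪ V2 := by rw [hcover]; exact Finset.mem_univ v
      rcases Finset.mem_union.1 this with h | h
      · exact Or.inl ⟨v, Finset.mem_inter.2 ⟨hv, h⟩⟩
      · exact Or.inr ⟨v, Finset.mem_inter.2 ⟨hv, h⟩⟩
    have hbip' : ∀ u v : V, G.Adj u v → (u ∈ V2 ∧ v ∈ V1) ∨ (u ∈ V1 ∧ v ∈ V2) :=
      fun u v h => (hbip u v h).symm
    rcases hcases with hne | hne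
    · have hsub := side_subset_aux G V1 V2 hdisj hbip D
      have hle : ((D ∩ V1) ∪ oddNbhd G (D ∩ V1)).card ≤ sInf S := by
        rw [← hm]; exact Finset.card_le_card hsub
      have hmemT : ((D ∩ V1) ∪ oddNbhd G (D ∩ V1)).card ∈ T :=
        ⟨D ∩ V1, hne, Or.inl (Finset.inter_subset_right), rfl⟩
      exact le_trans (Nat.sInf_le hmemT) hle
    · have hsub := side_subset_aux G V2 V1 hdisj.symm hbip' D
      have hle : ((D ∩ V2) ∪ oddNbhd G (D ∩ V2)).card ≤ sInf S := by
        rw [← hm]; exact Finset.card_le_card hsub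
      have hmemT : ((D ∩ V2) ∪ oddNbhd G (D ∩ V2)).card ∈ T :=
        ⟨D ∩ V2, hne, Or.inr (Finset.inter_subset_right), rfl⟩
      exact le_trans (Nat.sInf_le hmemT) hle
end
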